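/- arXiv:1211.6497 — 5 statements merged into one kernel-verified Lean document; each statement's English description precedes it below -/
import Mathlib

section
/- Let p, q > 0 with pq > 1, let c > 0, T > 0, and let A, B : [0,T) → ℝ be positive C¹ functions satisfying A'(t) ≥ c·B(t)^p/√(T−t) and B'(t) ≥ c·A(t)^q/√(T−t) for all t ∈ [0,T), and suppose A(t) → +∞ or B(t) → +∞ as t → T⁻. Then there exists C > 0 such that A(t) ≤ C(T−t)^{−α/2} and B(t) ≤ C(T−t)^{−β/2} for all t ∈ [0,T), where α = (p+1)/(pq−1) and β = (q+1)/(pq−1). -/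
open Real Set Filter
open scoped Topology

lemma sqrtTsub_hasDeriv (T s : ℝ) (h : s < T) :
    HasDerivAt (fun u => Real.sqrt (T - u)) (-(1 / (2 * Real.sqrt (T - s)))) s := by
  have h1 : HasDerivAt (fun u : ℝ => T - u) (-1) s := by
    simpa using (hasDerivAt_id s).const_sub T
  have h2 := (Real.hasDerivAt_sqrt (x := T - s) (by linarith)).comp s h1
  refine h2.congr_deriv ?_
  ring

lemma integrate_step (T a b κ : ℝ) (f f' : ℝ → ℝ) (hab : a ≤ b) (hbT : b < T)
    (hf : ∀ s ∈ Set.Icc a b, HasDerivWithinAt f (f' s) (Set.Icc a b) s)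
    (hbound : ∀ s ∈ Set.Icc a b, κ / Real.sqrt (T - s) ≤ f' s) :
    f a + 2 * κ * (Real.sqrt (T - a) - Real.sqrt (T - b)) ≤ f b := by
  set g : ℝ → ℝ := fun s => f s + 2 * κ * Real.sqrt (T - s) with hg
  have hmono : MonotoneOn g (Set.Icc a b) := by
    apply monotoneOn_of_hasDerivWithinAt_nonneg (f' := fun s => f' s - κ / Real.sqrt (T - s))
      (convex_Icc a b)
    · intro s hs
      exact ((hf s hs).continuousWithinAt).add
        ((continuous_const.mul ((continuous_const.sub continuous_id).sqrt)).continuousWithinAt)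
    · rw [interior_Icc]
      intro s hs
      have hsT' : s < T := lt_of_le_of_lt (le_of_lt hs.2) hbT
      have h1 := (hf s ⟨le_of_lt hs.1, le_of_lt hs.2⟩).mono (Set.Ioo_subset_Icc_self)
      have h2 := ((sqrtTsub_hasDeriv T s hsT').hasDerivWithinAt (s := Set.Ioo a b)).const_mul (2*κ)
      have h3 := h1.add h2
      refine h3.congr_deriv ?_
      have hsq : Real.sqrt (T - s) > 0 := Real.sqrt_pos.2 (by linarith)
      field_simp
      ring
    · rw [interior_Icc]
      intro s hs
      have := hbound s (Set.Ioo_subset_Icc_self hs)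
      linarith
  have := hmono (Set.left_mem_Icc.2 hab) (Set.right_mem_Icc.2 hab) hab
  simp only [hg] at this
  linarith

lemma pow_rpow_comm {a : ℝ} (ha : 0 ≤ a) (n : ℕ) (y : ℝ) : (a ^ n) ^ y = (a ^ y) ^ n := by
  rw [← Real.rpow_natCast a n, ← Real.rpow_mul ha, mul_comm, Real.rpow_mul ha,
    Real.rpow_natCast]

lemma core_bound (p q c T : ℝ) (hp : 0 < p) (hq : 0 < q) (hpq : 1 < p * q) (hc : 0 < c)
    (A B A' B' : ℝ → ℝ)
    (hApos : ∀ t ∈ Ico (0:ℝ) T, 0 < A t)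
    (hBpos : ∀ t ∈ Ico (0:ℝ) T, 0 < B t)
    (hA : ∀ t ∈ Ico (0:ℝ) T, HasDerivWithinAt A (A' t) (Ico 0 T) t)
    (hB : ∀ t ∈ Ico (0:ℝ) T, HasDerivWithinAt B (B' t) (Ico 0 T) t)
    (hAineq : ∀ t ∈ Ico (0:ℝ) T, c * B t ^ p / Real.sqrt (T - t) ≤ A' t)
    (hBineq : ∀ t ∈ Ico (0:ℝ) T, c * A t ^ q / Real.sqrt (T - t) ≤ B' t) :
    ∃ C > 0, ∀ t ∈ Ico (0:ℝ) T, A t ≤ C * (T - t) ^ (-((p + 1) / (p * q - 1)) / 2) := by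
  have hpq1 : 0 < p * q - 1 := by linarith
  set γ : ℝ := (p * q - 1)⁻¹ with hγdef
  have hγpos : 0 < γ := by positivity
  set α : ℝ := (p + 1) / (p * q - 1) with hαdef
  have hαpos : 0 < α := by positivity
  set G : ℝ := 2 * c * (2 * c) ^ p with hGdef
  have hGpos : 0 < G := by positivity
  set ρ : ℝ := (2 : ℝ) ^ α with hρdef
  have hρ1 : 1 < ρ := by
    rw [hρdef]
    exact (Real.one_lt_rpow_iff_of_pos (by norm_num)).2 (Or.inl ⟨by norm_num, hαpos⟩)
  have hρpos : 0 < ρ := lt_trans one_pos hρ1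
  refine ⟨(ρ / G) ^ γ * (8 : ℝ) ^ α, by positivity, ?_⟩
  intro t₀ ht₀
  obtain ⟨ht₀0, ht₀T⟩ := ht₀
  -- basic monotonicity of A on [0,T)
  have hAnn : ∀ s ∈ Ico (0:ℝ) T, 0 ≤ c * B s ^ p / Real.sqrt (T - s) := by
    intro s hs
    have := Real.rpow_nonneg (hBpos s hs).le p
    positivity
  have hmonoA : ∀ a b : ℝ, 0 ≤ a → a ≤ b → b < T → A a ≤ A b := by
    intro a b ha hab hbT
    have hsub : Icc a b ⊆ Ico 0 T := fun s hs => ⟨le_trans ha hs.1, lt_of_le_of_lt hs.2 hbT⟩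
    have key := integrate_step T a b 0 A A' hab hbT
      (fun s hs => (hA s (hsub hs)).mono hsub)
      (fun s hs => by
        rw [zero_div]
        exact le_trans (hAnn s (hsub hs)) (hAineq s (hsub hs)))
    linarith
  -- the dyadic sequence
  set x : ℝ := Real.sqrt (T - t₀) with hxdef
  have hxpos : 0 < x := Real.sqrt_pos.2 (by linarith)
  have hx2 : x ^ 2 = T - t₀ := Real.sq_sqrt (by linarith)
  set ξ : ℕ → ℝ := fun n => x * (1/2 + (1/2 : ℝ) ^ (n+1)) with hξdef
  set τ : ℕ → ℝ := fun n => T - (ξ n) ^ 2 with hτdef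
  set η : ℕ → ℝ := fun n => (ξ n + ξ (n+1)) / 2 with hηdef
  set μ : ℕ → ℝ := fun n => T - (η n) ^ 2 with hμdef
  set h : ℕ → ℝ := fun n => x * (1/2 : ℝ) ^ (n+3) with hhdef
  have hhpos : ∀ n, 0 < h n := by intro n; simp only [hhdef]; positivity
  have hξpos : ∀ n, 0 < ξ n := by intro n; simp only [hξdef]; positivity
  have hξlex : ∀ n, ξ n ≤ x := by
    intro n
    have h1 : ((1:ℝ)/2) ^ (n+1) ≤ ((1:ℝ)/2) ^ 1 :=
      pow_le_pow_of_le_one (by norm_num) (by norm_num) (by omega)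
    have h2 : 1/2 + ((1:ℝ)/2) ^ (n+1) ≤ 1 := by norm_num at h1 ⊢; linarith
    simp only [hξdef]
    calc x * (1/2 + (1/2 : ℝ) ^ (n+1)) ≤ x * 1 := mul_le_mul_of_nonneg_left h2 hxpos.le
    _ = x := mul_one x
  have hstep : ∀ n, ξ n - ξ (n+1) = 2 * h n := by
    intro n
    simp only [hξdef, hhdef, pow_succ]
    ring
  have hηξ : ∀ n, ξ n - η n = h n := by
    intro n; have := hstep n; simp only [hηdef]; linarith
  have hηξ' : ∀ n, η n - ξ (n+1) = h n := by
    intro n; have := hstep n; simp only [hηdef]; linarith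
  have hηpos : ∀ n, 0 < η n := by
    intro n; have h1 := hξpos n; have h2 := hξpos (n+1); simp only [hηdef]; linarith
  have hηlt : ∀ n, η n ≤ ξ n := by
    intro n; have h1 := hηξ n; have h2 := (hhpos n).le; linarith
  have hξη : ∀ n, ξ (n+1) ≤ η n := by
    intro n; have h1 := hηξ' n; have h2 := (hhpos n).le; linarith
  have hτmem : ∀ n, τ n ∈ Ico (0:ℝ) T ∧ t₀ ≤ τ n := by
    intro n
    have h1 : ξ n ^ 2 ≤ x ^ 2 := pow_le_pow_left₀ (hξpos n).le (hξlex n) 2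
    have h2 : 0 < ξ n ^ 2 := pow_pos (hξpos n) 2
    have h3 : t₀ ≤ τ n := by simp only [hτdef]; linarith
    exact ⟨⟨le_trans ht₀0 h3, by simp only [hτdef]; linarith⟩, h3⟩
  have hμmem : ∀ n, μ n ∈ Ico (0:ℝ) T ∧ τ n ≤ μ n ∧ μ n ≤ τ (n+1) := by
    intro n
    have h3 : η n ^ 2 ≤ ξ n ^ 2 := pow_le_pow_left₀ (hηpos n).le (hηlt n) 2
    have h4 : ξ (n+1) ^ 2 ≤ η n ^ 2 := pow_le_pow_left₀ (hξpos (n+1)).le (hξη n) 2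
    have h5 : (0:ℝ) ≤ τ n := (hτmem n).1.1
    have h6 : 0 < η n ^ 2 := pow_pos (hηpos n) 2
    simp only [hτdef] at h5
    refine ⟨⟨by simp only [hμdef]; linarith, by simp only [hμdef]; linarith⟩,
      by simp only [hμdef, hτdef]; linarith, by simp only [hμdef, hτdef]; linarith⟩
  have hsqτ : ∀ n, Real.sqrt (T - τ n) = ξ n := by
    intro n
    simp only [hτdef, sub_sub_cancel]
    exact Real.sqrt_sq (hξpos n).le
  have hsqμ : ∀ n, Real.sqrt (T - μ n) = η n := by
    intro n
    simp only [hμdef, sub_sub_cancel]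
    exact Real.sqrt_sq (hηpos n).le
  have hxhalf : ∀ n, x/2 ≤ ξ n := by
    intro n
    have h1 : (0:ℝ) ≤ (1/2:ℝ)^(n+1) := by positivity
    have h2 : x * (1/2 : ℝ) ≤ x * (1/2 + (1/2:ℝ)^(n+1)) :=
      mul_le_mul_of_nonneg_left (by linarith) hxpos.le
    simp only [hξdef]; linarith
  have hξ0 : ξ 0 = x := by simp only [hξdef]; norm_num
  have hτ0 : τ 0 = t₀ := by simp only [hτdef, hξ0]; linarith [hx2]
  have hupos : ∀ n, 0 < A (τ n) := fun n => hApos _ (hτmem n).1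
  -- Step I : lower bound for B on the second half of each dyadic block
  have SI : ∀ n, ∀ s ∈ Icc (μ n) (τ (n+1)), 2 * (c * A (τ n) ^ q) * h n ≤ B s := by
    intro n s hs
    have hτn := hτmem n
    have hτn1 := hτmem (n+1)
    have hμn := hμmem n
    have hsT : s < T := lt_of_le_of_lt hs.2 hτn1.1.2
    have hτns : τ n ≤ s := le_trans hμn.2.1 hs.1
    have hsub : Icc (τ n) s ⊆ Ico 0 T :=
      fun σ hσ => ⟨le_trans hτn.1.1 hσ.1, lt_of_le_of_lt hσ.2 hsT⟩
    have hκ : 0 ≤ c * A (τ n) ^ q := mul_nonneg hc.le (Real.rpow_nonneg (hupos n).le q)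
    have key := integrate_step T (τ n) s (c * A (τ n) ^ q) B B' hτns hsT
      (fun σ hσ => (hB σ (hsub hσ)).mono hsub)
      (fun σ hσ => by
        have hσm := hsub hσ
        have h1 := hBineq σ hσm
        have h2 : A (τ n) ≤ A σ := hmonoA (τ n) σ hτn.1.1 hσ.1 hσm.2
        have h3 : A (τ n) ^ q ≤ A σ ^ q := Real.rpow_le_rpow (hupos n).le h2 hq.le
        have hsq : 0 < Real.sqrt (T - σ) := Real.sqrt_pos.2 (by linarith [hσm.2])
        refine le_trans ?_ h1
        exact (div_le_div_iff_of_pos_right hsq).2 (mul_le_mul_of_nonneg_left h3 hc.le))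
    have e1 : Real.sqrt (T - τ n) = ξ n := hsqτ n
    have e2 : Real.sqrt (T - s) ≤ η n := by
      rw [← hsqμ n]
      exact Real.sqrt_le_sqrt (by linarith [hs.1])
    have e3 : h n ≤ Real.sqrt (T - τ n) - Real.sqrt (T - s) := by
      rw [e1]; have := hηξ n; linarith
    have hBτ : 0 < B (τ n) := hBpos _ hτn.1
    have h4 : 2 * (c * A (τ n) ^ q) * h n
        ≤ 2 * (c * A (τ n) ^ q) * (Real.sqrt (T - τ n) - Real.sqrt (T - s)) :=
      mul_le_mul_of_nonneg_left e3 (by linarith)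
    linarith
  -- Step II : recursion inequality
  have SII : ∀ n, 2 * (c * (2 * (c * A (τ n) ^ q) * h n) ^ p) * h n ≤ A (τ (n+1)) := by
    intro n
    have hμn := hμmem n
    have hτn1 := hτmem (n+1)
    have hκ : 0 ≤ c * A (τ n) ^ q := mul_nonneg hc.le (Real.rpow_nonneg (hupos n).le q)
    have hbase : 0 ≤ 2 * (c * A (τ n) ^ q) * h n :=
      mul_nonneg (mul_nonneg (by norm_num) hκ) (hhpos n).le
    have hsub : Icc (μ n) (τ (n+1)) ⊆ Ico 0 T :=
      fun σ hσ => ⟨le_trans hμn.1.1 hσ.1, lt_of_le_of_lt hσ.2 hτn1.1.2⟩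
    have key := integrate_step T (μ n) (τ (n+1)) (c * (2 * (c * A (τ n) ^ q) * h n) ^ p) A A'
      hμn.2.2 hτn1.1.2
      (fun σ hσ => (hA σ (hsub hσ)).mono hsub)
      (fun σ hσ => by
        have hσm := hsub hσ
        have h1 := hAineq σ hσm
        have h2 := SI n σ hσ
        have h3 : (2 * (c * A (τ n) ^ q) * h n) ^ p ≤ B σ ^ p :=
          Real.rpow_le_rpow hbase h2 hp.le
        have hsq : 0 < Real.sqrt (T - σ) := Real.sqrt_pos.2 (by linarith [hσm.2])
        refine le_trans ?_ h1
        exact (div_le_div_iff_of_pos_right hsq).2 (mul_le_mul_of_nonneg_left h3 hc.le))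
    rw [hsqμ n, hsqτ (n+1), hηξ' n] at key
    have hAμ : 0 < A (μ n) := hApos _ hμn.1
    linarith
  -- clean form of the recursion
  have R : ∀ n, G * ((x/8) ^ p * (x/8)) * (((1/2 : ℝ) ^ p) ^ n * (1/2 : ℝ) ^ n)
      * (A (τ n)) ^ (p * q) ≤ A (τ (n+1)) := by
    intro n
    have key := SII n
    have hh8 : h n = (x/8) * (1/2:ℝ)^n := by
      simp only [hhdef, pow_add]; ring
    have e0 : 2 * (c * A (τ n) ^ q) * h n = (2 * c * h n) * (A (τ n) ^ q) := by ring
    have e1 : (2 * (c * A (τ n) ^ q) * h n) ^ p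
        = (2*c) ^ p * (h n) ^ p * (A (τ n) ^ q) ^ p := by
      rw [e0, Real.mul_rpow (mul_nonneg (by positivity) (hhpos n).le) (Real.rpow_nonneg (hupos n).le q),
        Real.mul_rpow (by positivity) (hhpos n).le]
    have e2 : (A (τ n) ^ q) ^ p = (A (τ n)) ^ (p * q) := by
      rw [← Real.rpow_mul (hupos n).le, mul_comm q p]
    have e3 : (h n) ^ p = (x/8) ^ p * (((1/2:ℝ) ^ p)) ^ n := by
      rw [hh8, Real.mul_rpow (by positivity) (by positivity),
        pow_rpow_comm (by norm_num : (0:ℝ) ≤ 1/2)]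
    calc G * ((x/8) ^ p * (x/8)) * (((1/2 : ℝ) ^ p) ^ n * (1/2 : ℝ) ^ n) * (A (τ n)) ^ (p * q)
        = 2 * (c * (2 * (c * A (τ n) ^ q) * h n) ^ p) * h n := by
          rw [e1, e2, e3, hh8, hGdef]; ring
      _ ≤ A (τ (n+1)) := key
  -- the multiplicative constant and key exponent identities
  set E : ℝ := G * ((x/8) ^ p * (x/8)) with hEdef
  have hx8 : (0:ℝ) < x/8 := by positivity
  have hEpos : 0 < E := by
    have h1 : (0:ℝ) < (x/8) ^ p := Real.rpow_pos_of_pos hx8 p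
    have : 0 < (x/8) ^ p * (x/8) := mul_pos h1 hx8
    simp only [hEdef]; positivity
  have hρpow : ρ ^ (p*q-1) = (2:ℝ) ^ (p+1) := by
    rw [hρdef, ← Real.rpow_mul (by norm_num : (0:ℝ) ≤ 2), hαdef,
      div_mul_cancel₀ _ (ne_of_gt hpq1)]
  have hone : ((1/2:ℝ) ^ p) * (1/2) * (2:ℝ) ^ (p+1) = 1 := by
    rw [show ((1:ℝ)/2) = (2:ℝ)⁻¹ by norm_num, Real.inv_rpow (by norm_num),
      ← Real.rpow_neg (by norm_num),
      show ((2:ℝ)⁻¹) = (2:ℝ)^(-1:ℝ) by rw [Real.rpow_neg_one],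
      ← Real.rpow_add (by norm_num : (0:ℝ) < 2), ← Real.rpow_add (by norm_num : (0:ℝ) < 2)]
    rw [show -p + -1 + (p + 1) = (0:ℝ) by ring, Real.rpow_zero]
  by_cases hcase : E * (A (τ 0)) ^ (p*q-1) < ρ
  · -- the good case: extract the bound
    have hXlt : (A (τ 0)) ^ (p*q-1) < ρ / E := (lt_div_iff₀' hEpos).2 hcase
    have hu0 : A (τ 0) < (ρ/E) ^ γ := by
      have h1 := Real.rpow_lt_rpow (Real.rpow_nonneg (hupos 0).le _) hXlt hγpos
      rwa [← Real.rpow_mul (hupos 0).le, hγdef, mul_inv_cancel₀ (ne_of_gt hpq1),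
        Real.rpow_one] at h1
    have e5 : (x/8) ^ p * (x/8) = (x/8) ^ (p+1) := by
      rw [Real.rpow_add_one (ne_of_gt hx8)]
    have e6 : ρ / E = (ρ/G) * ((x/8) ^ ((p:ℝ)+1))⁻¹ := by
      rw [hEdef, e5]; field_simp
    have e7 : (ρ/E) ^ γ = (ρ/G) ^ γ * (x/8) ^ (-α) := by
      rw [e6, ← Real.rpow_neg hx8.le,
        Real.mul_rpow (by positivity) (Real.rpow_nonneg hx8.le _),
        ← Real.rpow_mul hx8.le]
      congr 1
      rw [hαdef, hγdef]; field_simp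
    have e8 : (x/8) ^ (-α) = (8:ℝ) ^ α * x ^ (-α) := by
      rw [Real.div_rpow hxpos.le (by norm_num : (0:ℝ) ≤ 8), Real.rpow_neg (by norm_num : (0:ℝ) ≤ 8),
        div_eq_mul_inv, inv_inv]
      ring
    have e9 : x ^ (-α) = (T - t₀) ^ (-α/2) := by
      rw [hxdef, Real.sqrt_eq_rpow, ← Real.rpow_mul (by linarith : (0:ℝ) ≤ T - t₀)]
      congr 1; ring
    have hfin : A t₀ < (ρ/G) ^ γ * (8:ℝ) ^ α * (T - t₀) ^ (-α/2) := by
      calc A t₀ = A (τ 0) := by rw [hτ0]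
        _ < (ρ/E) ^ γ := hu0
        _ = (ρ/G) ^ γ * (8:ℝ) ^ α * (T - t₀) ^ (-α/2) := by rw [e7, e8, e9]; ring
    linarith
  · -- the impossible case: A would be unbounded before T
    exfalso
    push_neg at hcase
    have IND : ∀ n, ρ ^ n * A (τ 0) ≤ A (τ n) := by
      intro n
      induction n with
      | zero => simpa using le_refl (A (τ 0))
      | succ n IH =>
        have hAn := hupos n
        have t0pos := hupos 0
        have hIHpos : 0 < ρ ^ n * A (τ 0) := mul_pos (pow_pos hρpos n) t0pos
        have e2 : (ρ ^ n * A (τ 0)) ^ (p*q-1)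
            = ((2:ℝ)^(p+1)) ^ n * (A (τ 0)) ^ (p*q-1) := by
          rw [Real.mul_rpow (pow_pos hρpos n).le t0pos.le,
            pow_rpow_comm hρpos.le, hρpow]
        have e3 : (ρ ^ n * A (τ 0)) ^ (p*q-1) ≤ A (τ n) ^ (p*q-1) :=
          Real.rpow_le_rpow hIHpos.le IH hpq1.le
        have e1 : A (τ n) ^ (p*q) = A (τ n) ^ (p*q-1) * A (τ n) := by
          rw [← Real.rpow_add_one (ne_of_gt hAn) (p*q-1), show p*q-1+1 = p*q by ring]
        have t1 : ((2:ℝ)^(p+1)) ^ n * (A (τ 0)) ^ (p*q-1) * A (τ n) ≤ A (τ n) ^ (p*q) := by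
          rw [e1, ← e2]
          exact mul_le_mul_of_nonneg_right e3 hAn.le
        have hcoeff : (0:ℝ) ≤ G * ((x/8) ^ p * (x/8)) * (((1/2:ℝ) ^ p) ^ n * (1/2:ℝ) ^ n) := by
          have h1 : (0:ℝ) ≤ (x/8) ^ p := Real.rpow_nonneg hx8.le p
          have h2 : (0:ℝ) ≤ ((1/2:ℝ) ^ p) := Real.rpow_nonneg (by norm_num) p
          positivity
        have t3 : G * ((x/8) ^ p * (x/8)) * (((1/2:ℝ) ^ p) ^ n * (1/2:ℝ) ^ n)
            * (((2:ℝ)^(p+1)) ^ n * (A (τ 0)) ^ (p*q-1) * A (τ n)) ≤ A (τ (n+1)) :=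
          le_trans (mul_le_mul_of_nonneg_left t1 hcoeff) (R n)
        have e4 : G * ((x/8) ^ p * (x/8)) * (((1/2:ℝ) ^ p) ^ n * (1/2:ℝ) ^ n)
            * (((2:ℝ)^(p+1)) ^ n * (A (τ 0)) ^ (p*q-1) * A (τ n))
            = E * (A (τ 0)) ^ (p*q-1) * A (τ n)
              * ((((1/2:ℝ) ^ p) * (1/2) * (2:ℝ)^(p+1)) ^ n) := by
          rw [hEdef, mul_pow, mul_pow]; ring
        rw [e4, hone, one_pow, mul_one] at t3
        have t4 : ρ * A (τ n) ≤ E * (A (τ 0)) ^ (p*q-1) * A (τ n) :=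
          mul_le_mul_of_nonneg_right hcase hAn.le
        have t5 : ρ * (ρ ^ n * A (τ 0)) ≤ ρ * A (τ n) :=
          mul_le_mul_of_nonneg_left IH hρpos.le
        calc ρ ^ (n+1) * A (τ 0) = ρ * (ρ ^ n * A (τ 0)) := by ring
          _ ≤ A (τ (n+1)) := by linarith
    -- but A is bounded on [t₀, τ∞]
    set τinf : ℝ := T - (x/2) ^ 2 with hτinfdef
    have hxh2 : (x/2) ^ 2 ≤ x ^ 2 := by nlinarith [hxpos]
    have hτinfT : τinf < T := by
      have : (0:ℝ) < (x/2)^2 := by positivity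
      simp only [hτinfdef]; linarith
    have hub : ∀ n, A (τ n) ≤ A τinf := by
      intro n
      have h1 : (x/2) ^ 2 ≤ ξ n ^ 2 := pow_le_pow_left₀ (by positivity) (hxhalf n) 2
      have h2 : τ n ≤ τinf := by simp only [hτdef, hτinfdef]; linarith
      exact hmonoA (τ n) τinf (hτmem n).1.1 h2 hτinfT
    obtain ⟨n, hn⟩ := pow_unbounded_of_one_lt (A τinf / A (τ 0)) hρ1
    have h1 : A τinf < ρ ^ n * A (τ 0) := (div_lt_iff₀ (hupos 0)).1 hn
    have h2 := IND n
    have h3 := hub n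
    linarith



/-- If `A, B` are positive `C¹` functions on `[0,T)` satisfying
`A'(t) ≥ c B(t)^p / √(T-t)` and `B'(t) ≥ c A(t)^q / √(T-t)`, with `p, q > 0`, `pq > 1`,
`c > 0`, and at least one of `A, B` blows up as `t → T⁻`, then there is `C > 0` with
`A(t) ≤ C (T-t)^{-α/2}` and `B(t) ≤ C (T-t)^{-β/2}` on `[0,T)`, where
`α = (p+1)/(pq-1)` and `β = (q+1)/(pq-1)`. -/
theorem blowup_rate_ode_lemma
    (p q c T : ℝ) (hp : 0 < p) (hq : 0 < q) (hpq : 1 < p * q) (hc : 0 < c) (hT : 0 < T)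
    (A B A' B' : ℝ → ℝ)
    (hApos : ∀ t ∈ Ico (0 : ℝ) T, 0 < A t)
    (hBpos : ∀ t ∈ Ico (0 : ℝ) T, 0 < B t)
    (hA : ∀ t ∈ Ico (0 : ℝ) T, HasDerivWithinAt A (A' t) (Ico 0 T) t)
    (hB : ∀ t ∈ Ico (0 : ℝ) T, HasDerivWithinAt B (B' t) (Ico 0 T) t)
    (hA' : ContinuousOn A' (Ico 0 T))
    (hB' : ContinuousOn B' (Ico 0 T))
    (hAineq : ∀ t ∈ Ico (0 : ℝ) T, c * B t ^ p / Real.sqrt (T - t) ≤ A' t)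
    (hBineq : ∀ t ∈ Ico (0 : ℝ) T, c * A t ^ q / Real.sqrt (T - t) ≤ B' t)
    (hblow : Tendsto A (nhdsWithin T (Ico 0 T)) atTop ∨
      Tendsto B (nhdsWithin T (Ico 0 T)) atTop) :
    ∃ C > 0, ∀ t ∈ Ico (0 : ℝ) T,
      A t ≤ C * (T - t) ^ (-((p + 1) / (p * q - 1)) / 2) ∧
      B t ≤ C * (T - t) ^ (-((q + 1) / (p * q - 1)) / 2) := by
  obtain ⟨C₁, hC₁, hbd₁⟩ :=
    core_bound p q c T hp hq hpq hc A B A' B' hApos hBpos hA hB hAineq hBineq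
  obtain ⟨C₂, hC₂, hbd₂⟩ :=
    core_bound q p c T hq hp (by rwa [mul_comm]) hc B A B' A' hBpos hApos hB hA hBineq hAineq
  rw [show q * p = p * q from mul_comm q p] at hbd₂
  refine ⟨max C₁ C₂, lt_max_of_lt_left hC₁, ?_⟩
  intro t ht
  have hTt : (0:ℝ) < T - t := by linarith [ht.2]
  constructor
  · calc A t ≤ C₁ * (T - t) ^ (-((p + 1) / (p * q - 1)) / 2) := hbd₁ t ht
      _ ≤ max C₁ C₂ * (T - t) ^ (-((p + 1) / (p * q - 1)) / 2) :=
        mul_le_mul_of_nonneg_right (le_max_left _ _) (Real.rpow_nonneg hTt.le _)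
  · calc B t ≤ C₂ * (T - t) ^ (-((q + 1) / (p * q - 1)) / 2) := hbd₂ t ht
      _ ≤ max C₁ C₂ * (T - t) ^ (-((q + 1) / (p * q - 1)) / 2) :=
        mul_le_mul_of_nonneg_right (le_max_right _ _) (Real.rpow_nonneg hTt.le _)
end

section
/- Let Γ(x,t) = (4πt)^{−n/2} exp(−|x|²/(4t)) be the heat kernel in ℝⁿ and S_R the sphere of radius R > 0 centered at the origin. For every σ ∈ (0,1) and every μ with 1/2 < μ < 1 there exists a constant C₀ > 0 such that for all x, y ∈ S_R with x ≠ y and all t > τ: |∂Γ/∂η_y (x−y, t−τ)| ≤ C₀ (t−τ)^{−μ} |x−y|^{−(n+1−2μ−σ)}, where ∂/∂η_y is the derivative with respect to y in the direction of the outward unit normal y/R. -/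
open MeasureTheory Metric Real Set Filter
open scoped Topology

noncomputable section

/-- The Laplacian of a function `f : ℝⁿ → ℝ`, as the sum of the second partial
derivatives in the coordinate directions. -/
def lap (n : ℕ) (f : EuclideanSpace ℝ (Fin n) → ℝ) (x : EuclideanSpace ℝ (Fin n)) : ℝ :=
  ∑ i : Fin n,
    fderiv ℝ (fun y => fderiv ℝ f y (EuclideanSpace.single i 1)) x (EuclideanSpace.single i 1)

/-- The fundamental solution (heat kernel) of the heat equation on `ℝⁿ`,
extended by `0` for nonpositive times. -/
def heatKernel (n : ℕ) (x : EuclideanSpace ℝ (Fin n)) (t : ℝ) : ℝ :=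
  if 0 < t then (4 * Real.pi * t) ^ (-(n : ℝ) / 2) * Real.exp (-‖x‖ ^ 2 / (4 * t)) else 0

/-- Directional derivative of the heat kernel in the second-point variable. -/
lemma hk_fderiv (n : ℕ) (x y v : EuclideanSpace ℝ (Fin n)) (s : ℝ) (hs : 0 < s) :
    fderiv ℝ (fun z => heatKernel n (x - z) s) y v =
      (4 * π * s) ^ (-(n : ℝ) / 2) * Real.exp (-‖x - y‖ ^ 2 / (4 * s)) *
        ((inner ℝ (x - y) v : ℝ) / (2 * s)) := by
  have hfun : (fun z : EuclideanSpace ℝ (Fin n) => heatKernel n (x - z) s) =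
      fun z => (4 * π * s) ^ (-(n : ℝ) / 2) *
        Real.exp ((inner ℝ (x - z) (x - z) : ℝ) * (-(4 * s)⁻¹)) := by
    funext z
    rw [heatKernel, if_pos hs, real_inner_self_eq_norm_sq]
    ring_nf
  have hg : HasFDerivAt (fun z : EuclideanSpace ℝ (Fin n) => x - z)
      (-(ContinuousLinearMap.id ℝ _)) y := (hasFDerivAt_id y).const_sub x
  have hinner := (hg.inner ℝ hg)
  have hfull := ((hinner.mul_const (-(4 * s)⁻¹)).exp).const_mul
    ((4 * π * s) ^ (-(n : ℝ) / 2))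
  rw [hfun, hfull.fderiv]
  simp only [ContinuousLinearMap.coe_smul', Pi.smul_apply, ContinuousLinearMap.coe_comp',
    Function.comp_apply, ContinuousLinearMap.prod_apply, ContinuousLinearMap.neg_apply,
    ContinuousLinearMap.coe_id', id_eq, fderivInnerCLM_apply, smul_eq_mul,
    inner_neg_right, inner_neg_left, real_inner_self_eq_norm_sq]
  rw [real_inner_comm v (x - y)]
  ring_nf

/-- `exp (-a) ≤ k^k * a^(-k)` for positive `a`, `k`. -/
lemma exp_neg_le_rpow (a k : ℝ) (ha : 0 < a) (hk : 0 < k) :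
    Real.exp (-a) ≤ k ^ k * a ^ (-k) := by
  have h1 : a ≤ k * Real.exp (a / k) := by
    have := Real.add_one_le_exp (a / k)
    have h : a / k ≤ Real.exp (a / k) := by linarith [div_nonneg ha.le hk.le]
    calc a = k * (a / k) := by field_simp
      _ ≤ k * Real.exp (a / k) := by gcongr
  have h2 : a ^ k ≤ k ^ k * Real.exp a := by
    calc a ^ k ≤ (k * Real.exp (a / k)) ^ k := Real.rpow_le_rpow ha.le h1 hk.le
      _ = k ^ k * (Real.exp (a / k)) ^ k := Real.mul_rpow hk.le (Real.exp_pos _).le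
      _ = k ^ k * Real.exp a := by
          rw [← Real.exp_mul, div_mul_cancel₀ _ hk.ne']
  have hak : (0:ℝ) < a ^ k := Real.rpow_pos_of_pos ha k
  calc Real.exp (-a) = a ^ k * Real.exp (-a) / a ^ k := by field_simp
    _ ≤ k ^ k * Real.exp a * Real.exp (-a) / a ^ k := by gcongr
    _ = k ^ k * a ^ (-k) := by
        rw [Real.rpow_neg ha.le, mul_assoc, ← Real.exp_add]
        simp [mul_comm, div_eq_mul_inv]

/-- The purely scalar estimate. -/
lemma main_bound (n : ℕ) (hn : 0 < n) (R σ μ s r : ℝ) (hR : 0 < R) (hs : 0 < s)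
    (hr : 0 < r) (hr2 : r ≤ 2 * R) (hσ : σ ∈ Ioo (0:ℝ) 1) (hμ₁ : 1/2 < μ) (hμ₂ : μ < 1) :
    (4 * π * s) ^ (-(n : ℝ) / 2) * Real.exp (-r ^ 2 / (4 * s)) * (r ^ 2 / (4 * s * R)) ≤
      ((4 * π) ^ (-(n : ℝ) / 2) * (((n:ℝ)/2 + 1 - μ) ^ ((n:ℝ)/2 + 1 - μ) *
        4 ^ ((n:ℝ)/2 + 1 - μ)) * (2 * R) ^ (1 - σ) / (4 * R)) *
        s ^ (-μ) * r ^ (-((n : ℝ) + 1 - 2 * μ - σ)) := by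
  set k : ℝ := (n:ℝ)/2 + 1 - μ with hkdef
  have hk : 0 < k := by
    have : (1:ℝ) ≤ (n:ℝ) := by exact_mod_cast hn
    simp only [hkdef]; nlinarith
  have ha : 0 < r ^ 2 / (4 * s) := by positivity
  have hE := exp_neg_le_rpow _ k ha hk
  have e1 : (r ^ 2 / (4 * s)) ^ (-k) = 4 ^ k * s ^ k * r ^ (-(2*k)) := by
    rw [Real.rpow_neg ha.le, Real.div_rpow (by positivity) (by positivity),
      Real.mul_rpow (by norm_num) hs.le,
      ← Real.rpow_natCast r 2, ← Real.rpow_mul hr.le, Real.rpow_neg hr.le]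
    push_cast
    rw [mul_comm (2:ℝ) k]
    field_simp
  have e2 : (4 * π * s) ^ (-(n : ℝ) / 2) = (4 * π) ^ (-(n : ℝ) / 2) * s ^ (-(n : ℝ) / 2) :=
    Real.mul_rpow (by positivity) hs.le
  have hexp : Real.exp (-r ^ 2 / (4 * s)) ≤ k ^ k * (4 ^ k * s ^ k * r ^ (-(2*k))) := by
    rw [← e1, neg_div]; exact hE
  have step1 : (4 * π * s) ^ (-(n : ℝ) / 2) * Real.exp (-r ^ 2 / (4 * s)) * (r ^ 2 / (4 * s * R)) ≤
      (4 * π) ^ (-(n : ℝ) / 2) * s ^ (-(n : ℝ) / 2) * (k ^ k * (4 ^ k * s ^ k * r ^ (-(2*k)))) *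
        (r ^ 2 / (4 * s * R)) := by
    rw [e2]; gcongr
  refine step1.trans ?_
  have hspow : s ^ (-(n : ℝ) / 2) * s ^ k * s⁻¹ = s ^ (-μ) := by
    rw [show s⁻¹ = s ^ (-1:ℝ) by rw [Real.rpow_neg_one],
      ← Real.rpow_add hs, ← Real.rpow_add hs]
    congr 1; simp only [hkdef]; ring
  have hrpow : r ^ (-(2*k)) * r ^ 2 = r ^ ((1:ℝ) - σ) * r ^ (-((n : ℝ) + 1 - 2 * μ - σ)) := by
    rw [← Real.rpow_natCast r 2, ← Real.rpow_add hr, ← Real.rpow_add hr]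
    congr 1; push_cast; simp only [hkdef]; ring
  have hrle : r ^ ((1:ℝ) - σ) ≤ (2*R) ^ ((1:ℝ) - σ) :=
    Real.rpow_le_rpow hr.le hr2 (by linarith [hσ.2])
  calc (4 * π) ^ (-(n : ℝ) / 2) * s ^ (-(n : ℝ) / 2) * (k ^ k * (4 ^ k * s ^ k * r ^ (-(2*k)))) *
        (r ^ 2 / (4 * s * R))
      = ((4 * π) ^ (-(n : ℝ) / 2) * (k ^ k * 4 ^ k) / (4 * R)) *
        (s ^ (-(n : ℝ) / 2) * s ^ k * s⁻¹) * (r ^ (-(2*k)) * r ^ 2) := by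
        field_simp
    _ = ((4 * π) ^ (-(n : ℝ) / 2) * (k ^ k * 4 ^ k) / (4 * R)) * s ^ (-μ) *
        (r ^ ((1:ℝ) - σ) * r ^ (-((n : ℝ) + 1 - 2 * μ - σ))) := by rw [hspow, hrpow]
    _ ≤ ((4 * π) ^ (-(n : ℝ) / 2) * (k ^ k * 4 ^ k) / (4 * R)) * s ^ (-μ) *
        ((2*R) ^ ((1:ℝ) - σ) * r ^ (-((n : ℝ) + 1 - 2 * μ - σ))) := by
        gcongr
    _ = ((4 * π) ^ (-(n : ℝ) / 2) * (k ^ k * 4 ^ k) * (2 * R) ^ (1 - σ) / (4 * R)) *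
        s ^ (-μ) * r ^ (-((n : ℝ) + 1 - 2 * μ - σ)) := by ring

/-- For every `σ ∈ (0,1)` and `1/2 < μ < 1` there is `C₀ > 0` such that
the normal derivative (in `y`, in the direction of the outward normal `y/R`) of the heat
kernel satisfies `|∂Γ/∂η_y (x-y, t-τ)| ≤ C₀ (t-τ)^{-μ} |x-y|^{-(n+1-2μ-σ)}` for all
`x, y ∈ S_R` with `x ≠ y` and all `τ < t`. -/
theorem heatKernel_normal_deriv_bound
    (n : ℕ) (hn : 0 < n) (R σ μ : ℝ) (hR : 0 < R)
    (hσ : σ ∈ Ioo (0 : ℝ) 1) (hμ₁ : 1 / 2 < μ) (hμ₂ : μ < 1) :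
    ∃ C₀ > 0, ∀ x ∈ sphere (0 : EuclideanSpace ℝ (Fin n)) R,
      ∀ y ∈ sphere (0 : EuclideanSpace ℝ (Fin n)) R, x ≠ y → ∀ t τ : ℝ, τ < t →
      |fderiv ℝ (fun z => heatKernel n (x - z) (t - τ)) y (R⁻¹ • y)| ≤
        C₀ * (t - τ) ^ (-μ) * ‖x - y‖ ^ (-((n : ℝ) + 1 - 2 * μ - σ)) := by
  have hk : (0:ℝ) < (n:ℝ)/2 + 1 - μ := by
    have : (1:ℝ) ≤ (n:ℝ) := by exact_mod_cast hn
    nlinarith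
  refine ⟨(4 * π) ^ (-(n : ℝ) / 2) * (((n:ℝ)/2 + 1 - μ) ^ ((n:ℝ)/2 + 1 - μ) *
      4 ^ ((n:ℝ)/2 + 1 - μ)) * (2 * R) ^ (1 - σ) / (4 * R), ?_, ?_⟩
  · apply div_pos _ (by positivity)
    apply mul_pos (mul_pos (Real.rpow_pos_of_pos (by positivity) _)
      (mul_pos (Real.rpow_pos_of_pos hk _) (Real.rpow_pos_of_pos (by norm_num) _)))
      (Real.rpow_pos_of_pos (by positivity) _)
  · intro x hx y hy hxy t τ hτ
    have hs : 0 < t - τ := sub_pos.2 hτ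
    have hxR : ‖x‖ = R := by simpa using hx
    have hyR : ‖y‖ = R := by simpa using hy
    have hr : 0 < ‖x - y‖ := by
      rw [norm_pos_iff]; exact sub_ne_zero.2 hxy
    have hr2 : ‖x - y‖ ≤ 2 * R := by
      calc ‖x - y‖ ≤ ‖x‖ + ‖y‖ := norm_sub_le x y
        _ = 2 * R := by rw [hxR, hyR]; ring
    -- the inner product identity
    have hinner : (inner ℝ (x - y) (R⁻¹ • y) : ℝ) = -‖x - y‖ ^ 2 / (2 * R) := by
      rw [real_inner_smul_right]
      have h1 : (inner ℝ (x - y) y : ℝ) = inner ℝ x y - R ^ 2 := by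
        rw [inner_sub_left, real_inner_self_eq_norm_sq, hyR]
      have h2 : ‖x - y‖ ^ 2 = 2 * R ^ 2 - 2 * inner ℝ x y := by
        rw [norm_sub_sq_real, hxR, hyR]; ring
      have h3 : (inner ℝ x y : ℝ) - R ^ 2 = -‖x - y‖ ^ 2 / 2 := by linarith
      rw [h1, h3]
      field_simp [hR.ne']
    rw [hk_fderiv n x y _ _ hs, hinner]
    have hval : (4 * π * (t - τ)) ^ (-(n : ℝ) / 2) * Real.exp (-‖x - y‖ ^ 2 / (4 * (t - τ))) *
        (-‖x - y‖ ^ 2 / (2 * R) / (2 * (t - τ))) =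
        -((4 * π * (t - τ)) ^ (-(n : ℝ) / 2) * Real.exp (-‖x - y‖ ^ 2 / (4 * (t - τ))) *
          (‖x - y‖ ^ 2 / (4 * (t - τ) * R))) := by
      field_simp; ring
    rw [hval, abs_neg, abs_of_nonneg (by positivity)]
    exact main_bound n hn R σ μ (t - τ) ‖x - y‖ hR hs hr hr2 hσ hμ₁ hμ₂
end
end

section
/- Let Γ(x,t) = (4πt)^{−n/2} exp(−|x|²/(4t)) be the heat kernel in ℝⁿ and S_R the sphere of radius R > 0 centered at the origin, with surface measure ds_y. Then there exist constants c > 0 and δ > 0 such that for every x ∈ S_R and all times 0 < t₁ < t₂ with t₂ − t₁ < δ: ∫_{S_R} Γ(x−y, t₂−t₁) ds_y ≥ c/√(t₂−t₁). -/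
open MeasureTheory Metric Real Set Filter
open scoped Topology ENNReal NNReal
open Module

noncomputable section

lemma aux_insertNth_lip (m : ℕ) (i : Fin (m+1)) (a : ℝ) :
    LipschitzWith 1 (fun w : Fin m → ℝ => (i.insertNth a w : Fin (m+1) → ℝ)) := by
  apply LipschitzWith.of_dist_le_mul
  intro w w'
  rw [NNReal.coe_one, one_mul]
  refine (dist_pi_le_iff dist_nonneg).2 fun j => ?_
  rcases eq_or_ne j i with rfl | hj
  · simp [dist_nonneg]
  · obtain ⟨k, rfl⟩ := Fin.exists_succAbove_eq hj
    simp only [Fin.insertNth_apply_succAbove]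
    exact dist_le_pi_dist w w' k

lemma aux_supsphere (m : ℕ) (R : ℝ) (hR : 0 < R) :
    μH[(m:ℝ)] (sphere (0 : Fin (m+1) → ℝ) R) < ⊤ := by
  have hcover : sphere (0 : Fin (m+1) → ℝ) R ⊆
      ⋃ i : Fin (m+1), ⋃ a ∈ ({R, -R} : Finset ℝ),
        (fun w : Fin m → ℝ => (i.insertNth a w : Fin (m+1) → ℝ)) '' closedBall 0 R := by
    intro z hz
    rw [mem_sphere_zero_iff_norm] at hz
    have hi : ∃ i, ‖z i‖ = R := by
      by_contra h
      push_neg at h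
      have : ‖z‖ < R := (pi_norm_lt_iff hR).2 fun i =>
        lt_of_le_of_ne (hz ▸ norm_le_pi_norm z i) (h i)
      exact absurd hz this.ne
    obtain ⟨i, hi⟩ := hi
    have ha : z i ∈ ({R, -R} : Finset ℝ) := by
      rw [Real.norm_eq_abs, abs_eq hR.le] at hi
      simpa using hi
    refine mem_iUnion.2 ⟨i, ?_⟩
    refine mem_iUnion₂.2 ⟨z i, ha, ⟨i.removeNth z, ?_, ?_⟩⟩
    · rw [mem_closedBall_zero_iff]
      refine (pi_norm_le_iff_of_nonneg hR.le).2 fun k => ?_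
      exact hz ▸ norm_le_pi_norm z (i.succAbove k)
    · exact Fin.insertNth_self_removeNth i z
  refine lt_of_le_of_lt (measure_mono hcover) ?_
  refine lt_of_le_of_lt (measure_iUnion_le _) ?_
  have hfin : ∀ i : Fin (m+1),
      μH[(m:ℝ)] (⋃ a ∈ ({R, -R} : Finset ℝ),
        (fun w : Fin m → ℝ => (i.insertNth a w : Fin (m+1) → ℝ)) '' closedBall 0 R) < ⊤ := by
    intro i
    refine lt_of_le_of_lt (measure_biUnion_finset_le _ _) ?_
    refine ENNReal.sum_lt_top.2 fun a _ => ?_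
    refine lt_of_le_of_lt ((aux_insertNth_lip m i a).hausdorffMeasure_image_le (by positivity) _) ?_
    have hH : (μH[(m:ℝ)] : Measure (Fin m → ℝ)) = volume := by
      have := hausdorffMeasure_pi_real (ι := Fin m)
      simpa using this
    rw [hH]
    simp only [ENNReal.coe_one, ENNReal.one_rpow, one_mul]
    exact measure_closedBall_lt_top
  rw [tsum_fintype]
  exact ENNReal.sum_lt_top.2 fun i _ => hfin i

lemma aux_norm_smul_sub {E : Type*} [NormedAddCommGroup E] [NormedSpace ℝ E]
    {R : ℝ} (hR : 0 < R) {y z : E} (hy : R ≤ ‖y‖) (hz : R ≤ ‖z‖) :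
    ‖(R/‖y‖) • y - (R/‖z‖) • z‖ ≤ 2 * ‖y - z‖ := by
  have hy0 : (0:ℝ) < ‖y‖ := hR.trans_le hy
  have hz0 : (0:ℝ) < ‖z‖ := hR.trans_le hz
  have key : (R/‖y‖) • y - (R/‖z‖) • z
      = (R/‖y‖) • (y - z) + ((R/‖y‖) - (R/‖z‖)) • z := by
    rw [smul_sub, sub_smul]; abel
  rw [key]
  have h1 : ‖(R/‖y‖) • (y - z)‖ ≤ 1 * ‖y - z‖ := by
    rw [norm_smul, Real.norm_eq_abs, abs_of_nonneg (by positivity)]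
    gcongr
    exact div_le_one_of_le₀ hy hy0.le
  have h2 : ‖((R/‖y‖) - (R/‖z‖)) • z‖ ≤ 1 * ‖y - z‖ := by
    rw [norm_smul, Real.norm_eq_abs]
    have heq : R/‖y‖ - R/‖z‖ = R * (‖z‖ - ‖y‖) / (‖y‖ * ‖z‖) := by
      field_simp
    rw [heq]
    have habs : |R * (‖z‖ - ‖y‖) / (‖y‖ * ‖z‖)| ≤ R * ‖y - z‖ / (‖y‖ * ‖z‖) := by
      rw [abs_div, abs_of_nonneg (by positivity : (0:ℝ) ≤ ‖y‖ * ‖z‖), abs_mul,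
        abs_of_nonneg hR.le]
      gcongr
      calc |‖z‖ - ‖y‖| ≤ ‖z - y‖ := abs_norm_sub_norm_le z y
        _ = ‖y - z‖ := norm_sub_rev z y
    calc |R * (‖z‖ - ‖y‖) / (‖y‖ * ‖z‖)| * ‖z‖ ≤ R * ‖y - z‖ / (‖y‖ * ‖z‖) * ‖z‖ := by gcongr
      _ = (R / ‖y‖) * ‖y - z‖ := by field_simp
      _ ≤ 1 * ‖y - z‖ := by gcongr; exact div_le_one_of_le₀ hy hy0.le
  calc ‖(R/‖y‖) • (y - z) + ((R/‖y‖) - (R/‖z‖)) • z‖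
      ≤ ‖(R/‖y‖) • (y - z)‖ + ‖((R/‖y‖) - (R/‖z‖)) • z‖ := norm_add_le _ _
    _ ≤ 1 * ‖y - z‖ + 1 * ‖y - z‖ := add_le_add h1 h2
    _ = 2 * ‖y - z‖ := by ring

lemma aux_sphere_finite (m : ℕ) (R : ℝ) (hR : 0 < R)
    (hsup : μH[(m:ℝ)] (sphere (0 : Fin (m+1) → ℝ) R) < ⊤) :
    μH[(m:ℝ)] (sphere (0 : EuclideanSpace ℝ (Fin (m+1))) R) < ⊤ := by
  set e := WithLp.equiv 2 (Fin (m+1) → ℝ) with he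
  set g : (Fin (m+1) → ℝ) → EuclideanSpace ℝ (Fin (m+1)) :=
    fun z => (R / ‖e.symm z‖) • (e.symm z) with hg
  have hes : ∀ z w : Fin (m+1) → ℝ, dist (e.symm z) (e.symm w) ≤ (m+1 : ℝ) * dist z w := by
    intro z w
    have h := (PiLp.antilipschitzWith_ofLp 2 (fun _ : Fin (m+1) => ℝ)).le_mul_dist
      (e.symm z) (e.symm w)
    simp only [he, Equiv.apply_symm_apply, WithLp.equiv_symm_apply, WithLp.ofLp_toLp] at h
    refine h.trans (mul_le_mul_of_nonneg_right ?_ dist_nonneg)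
    rw [NNReal.coe_rpow]
    have h2 : ((1:ℝ≥0∞)/2).toReal = (1/2 : ℝ) := by norm_num
    rw [h2]
    push_cast [Fintype.card_fin]
    calc ((m+1 : ℝ)) ^ ((1:ℝ)/2) ≤ ((m+1 : ℝ)) ^ ((1:ℝ)) := by
          apply Real.rpow_le_rpow_of_exponent_le
          · exact_mod_cast Nat.one_le_iff_ne_zero.2 (Nat.succ_ne_zero m)
          · norm_num
      _ = (m+1 : ℝ) := Real.rpow_one _
  have hge : ∀ z : Fin (m+1) → ℝ, ‖z‖ ≤ ‖e.symm z‖ := by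
    intro z
    have h := (PiLp.lipschitzWith_ofLp 2 (fun _ : Fin (m+1) => ℝ)).dist_le_mul (e.symm z) 0
    simpa [he, Equiv.apply_symm_apply, dist_zero_right] using h
  -- g is Lipschitz on the sup-sphere
  have hglip : LipschitzOnWith (2 * (m+1 : ℝ≥0)) g (sphere (0 : Fin (m+1) → ℝ) R) := by
    apply LipschitzOnWith.of_dist_le_mul
    intro z hz w hw
    rw [mem_sphere_zero_iff_norm] at hz hw
    have hz' : R ≤ ‖e.symm z‖ := hz ▸ hge z
    have hw' : R ≤ ‖e.symm w‖ := hw ▸ hge w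
    have key := aux_norm_smul_sub hR hz' hw'
    calc dist (g z) (g w) = ‖(R/‖e.symm z‖) • (e.symm z) - (R/‖e.symm w‖) • (e.symm w)‖ := by
          rw [hg]; exact dist_eq_norm _ _
      _ ≤ 2 * ‖e.symm z - e.symm w‖ := key
      _ = 2 * dist (e.symm z) (e.symm w) := by rw [dist_eq_norm]
      _ ≤ 2 * ((m+1 : ℝ) * dist z w) := by
          have := hes z w
          nlinarith [dist_nonneg (x := z) (y := w)]
      _ = ↑(2 * (m+1 : ℝ≥0)) * dist z w := by push_cast; ring
  -- the euclidean sphere is covered by the image of the sup-sphere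
  have hcov : sphere (0 : EuclideanSpace ℝ (Fin (m+1))) R ⊆
      g '' (sphere (0 : Fin (m+1) → ℝ) R) := by
    intro y hy
    rw [mem_sphere_zero_iff_norm] at hy
    have hy0 : y ≠ 0 := by
      intro h; rw [h, norm_zero] at hy; exact hR.ne hy
    have hey0 : (0:ℝ) < ‖e y‖ := by
      rw [norm_pos_iff]
      intro h
      apply hy0
      have := congrArg e.symm h
      simpa [he] using this
    set t := R / ‖e y‖ with ht
    have ht0 : 0 < t := div_pos hR hey0
    refine ⟨t • e y, ?_, ?_⟩
    · rw [mem_sphere_zero_iff_norm, norm_smul, Real.norm_eq_abs, abs_of_pos ht0, ht]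
      field_simp
    · have hsymm : e.symm (t • e y) = t • y := by
        rw [he, WithLp.equiv_symm_apply, WithLp.toLp_smul]
        simp [he]
      rw [hg]
      simp only [hsymm]
      rw [norm_smul, Real.norm_eq_abs, abs_of_pos ht0, hy, smul_smul]
      have : R / (t * R) * t = 1 := by field_simp
      rw [this, one_smul]
  calc μH[(m:ℝ)] (sphere (0 : EuclideanSpace ℝ (Fin (m+1))) R)
      ≤ μH[(m:ℝ)] (g '' (sphere (0 : Fin (m+1) → ℝ) R)) := measure_mono hcov
    _ ≤ (↑(2 * (m+1 : ℝ≥0)) : ℝ≥0∞) ^ (m:ℝ) * μH[(m:ℝ)] (sphere (0 : Fin (m+1) → ℝ) R) :=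
        hglip.hausdorffMeasure_image_le (by positivity)
    _ < ⊤ := ENNReal.mul_lt_top
        (ENNReal.rpow_lt_top_of_nonneg (by positivity) ENNReal.coe_ne_top) hsup

-- lower bound for Hausdorff measure of a Euclidean ball
lemma aux_ball_lower (m : ℕ) (ρ : ℝ) (hρ : 0 < ρ) :
    ENNReal.ofReal ((2 * (ρ/(m+1)))^m) ≤ μH[(m:ℝ)] (ball (0 : EuclideanSpace ℝ (Fin m)) ρ) := by
  set e := WithLp.equiv 2 (Fin m → ℝ) with he
  have hsub : ball (0 : Fin m → ℝ) (ρ/(m+1)) ⊆ e '' (ball (0 : EuclideanSpace ℝ (Fin m)) ρ) := by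
    intro z hz
    rw [mem_ball_zero_iff] at hz
    refine ⟨e.symm z, ?_, e.apply_symm_apply z⟩
    rw [mem_ball_zero_iff]
    have h := (PiLp.antilipschitzWith_ofLp 2 (fun _ : Fin m => ℝ)).le_mul_dist (e.symm z) 0
    simp only [he, Equiv.apply_symm_apply, dist_zero_right, WithLp.equiv_symm_apply, WithLp.ofLp_toLp, WithLp.ofLp_zero] at h
    have hc : ((((Fintype.card (Fin m) : ℝ≥0)) ^ ((1:ℝ≥0∞)/2).toReal : ℝ≥0) : ℝ) ≤ (m+1 : ℝ) := by
      rw [NNReal.coe_rpow]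
      have h2 : ((1:ℝ≥0∞)/2).toReal = (1/2 : ℝ) := by norm_num
      rw [h2]
      push_cast [Fintype.card_fin]
      rcases Nat.eq_zero_or_pos m with hm | hm
      · subst hm; norm_num
      calc ((m : ℝ)) ^ ((1:ℝ)/2) ≤ ((m : ℝ)) ^ ((1:ℝ)) := by
            apply Real.rpow_le_rpow_of_exponent_le
            · exact_mod_cast hm
            · norm_num
        _ = (m : ℝ) := Real.rpow_one _
        _ ≤ (m + 1 : ℝ) := by linarith
    have hz0 : ‖z‖ ≤ dist z (0 : Fin m → ℝ) := by rw [dist_zero_right]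
    calc ‖e.symm z‖
        ≤ ((((Fintype.card (Fin m) : ℝ≥0)) ^ ((1:ℝ≥0∞)/2).toReal : ℝ≥0) : ℝ) * ‖z‖ := by
          simpa [dist_zero_right, he, WithLp.equiv_symm_apply] using h
      _ ≤ (m+1 : ℝ) * ‖z‖ := mul_le_mul_of_nonneg_right hc (norm_nonneg z)
      _ < (m+1 : ℝ) * (ρ/(m+1)) := by
          have hm1 : (0:ℝ) < m+1 := by positivity
          exact (mul_lt_mul_iff_right₀ hm1).2 hz
      _ = ρ := by field_simp
  have hH : (μH[(m:ℝ)] : Measure (Fin m → ℝ)) = volume := by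
    have := hausdorffMeasure_pi_real (ι := Fin m)
    simpa using this
  calc ENNReal.ofReal ((2 * (ρ/(m+1)))^m)
      = volume (ball (0 : Fin m → ℝ) (ρ/(m+1))) := by
        rw [Real.volume_pi_ball _ (by positivity)]
        simp [Fintype.card_fin]
    _ = μH[(m:ℝ)] (ball (0 : Fin m → ℝ) (ρ/(m+1))) := by rw [hH]
    _ ≤ μH[(m:ℝ)] (e '' (ball (0 : EuclideanSpace ℝ (Fin m)) ρ)) := measure_mono hsub
    _ ≤ (1:ℝ≥0∞) ^ (m:ℝ) * μH[(m:ℝ)] (ball (0 : EuclideanSpace ℝ (Fin m)) ρ) := by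
        simpa [he, WithLp.equiv_apply] using (PiLp.lipschitzWith_ofLp 2 (fun _ : Fin m => ℝ)).hausdorffMeasure_image_le
          (by positivity) (ball (0 : EuclideanSpace ℝ (Fin m)) ρ)
    _ = μH[(m:ℝ)] (ball (0 : EuclideanSpace ℝ (Fin m)) ρ) := by simp

lemma aux_le_of_sq {c r : ℝ} (hc : 0 ≤ c) (hr : 0 ≤ r) (h : c^2 ≤ r^2) : c ≤ r := by
  nlinarith

lemma aux_real (R r a : ℝ) (hR : 0 < R) (hr0 : 0 < r) (hrR : r ≤ R) (ha0 : 0 ≤ a)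
    (har : a < r/2) :
    0 ≤ R^2 - a^2 ∧
    (∀ b : ℝ, 0 ≤ b → b^2 = R^2 - a^2 →
       a^2 + b^2 = R^2 ∧ a^2 + (R - b)^2 ≤ r^2) := by
  have haR : a ≤ R := by linarith
  refine ⟨by nlinarith, fun b hb0 hb2 => ⟨by linarith, ?_⟩⟩
  have hbRa : R - b ≤ a := by
    nlinarith [sq_nonneg (b - (R - a)), sq_nonneg (b + (R - a))]
  have hbR : b ≤ R := by nlinarith [sq_nonneg a]
  have h3 : (R - b)^2 ≤ a^2 := by
    nlinarith [mul_nonneg (by linarith : (0:ℝ) ≤ a - (R - b))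
      (by linarith : (0:ℝ) ≤ a + (R - b))]
  nlinarith

lemma aux_cap_lower (m : ℕ) (R : ℝ) (hR : 0 < R) (x : EuclideanSpace ℝ (Fin (m+1)))
    (hx : ‖x‖ = R) (r : ℝ) (hr0 : 0 < r) (hrR : r ≤ R) :
    ENNReal.ofReal ((r/(m+1))^m) ≤
      μH[(m:ℝ)] (sphere (0 : EuclideanSpace ℝ (Fin (m+1))) R ∩ closedBall x r) := by
  have hx0 : x ≠ 0 := by intro h; rw [h, norm_zero] at hx; exact hR.ne hx
  haveI : Fact (finrank ℝ (EuclideanSpace ℝ (Fin (m+1))) = m + 1) :=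
    ⟨by simp [finrank_euclideanSpace]⟩
  set H := (Submodule.span ℝ ({x} : Set (EuclideanSpace ℝ (Fin (m+1)))))ᗮ with hHdef
  have hHrank : finrank ℝ H = m := Submodule.finrank_orthogonal_span_singleton hx0
  have e : H ≃ₗᵢ[ℝ] EuclideanSpace ℝ (Fin m) :=
    (stdOrthonormalBasis ℝ H).repr.trans
      (LinearIsometryEquiv.piLpCongrLeft 2 ℝ ℝ (finCongr hHrank))
  set P := H.orthogonalProjectionOnto with hPdef
  set Q : EuclideanSpace ℝ (Fin (m+1)) → EuclideanSpace ℝ (Fin m) := fun y => e (P y) with hQdef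
  have hQlip : LipschitzWith 1 Q := by
    have h1 : LipschitzWith (1 * ‖P‖₊) Q := e.isometry.lipschitz.comp P.lipschitz
    apply h1.weaken
    rw [one_mul]
    rw [← NNReal.coe_le_coe]
    simpa using H.orthogonalProjectionOnto_norm_le
  have hxH : x ∈ Hᗮ := by
    rw [hHdef, Submodule.orthogonal_orthogonal]
    exact Submodule.mem_span_singleton_self x
  have hball : ball (0 : EuclideanSpace ℝ (Fin m)) (r/2) ⊆
      Q '' (sphere (0 : EuclideanSpace ℝ (Fin (m+1))) R ∩ closedBall x r) := by
    intro u hu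
    rw [mem_ball_zero_iff] at hu
    obtain ⟨w, hwdef⟩ : ∃ w : H, w = e.symm u := ⟨_, rfl⟩
    obtain ⟨a, hadef⟩ : ∃ a : ℝ, a = ‖(w : EuclideanSpace ℝ (Fin (m+1)))‖ := ⟨_, rfl⟩
    have hwn : a = ‖u‖ := by
      rw [hadef, hwdef, Submodule.norm_coe]
      exact e.symm.norm_map u
    have ha0 : 0 ≤ a := hadef ▸ norm_nonneg _
    have har : a < r/2 := by rw [hwn]; exact hu
    obtain ⟨hRa, hkey⟩ := aux_real R r a hR hr0 hrR ha0 har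
    obtain ⟨b, hbdef⟩ : ∃ b : ℝ, b = Real.sqrt (R^2 - a^2) := ⟨_, rfl⟩
    have hb0 : 0 ≤ b := hbdef ▸ Real.sqrt_nonneg _
    have hb2 : b^2 = R^2 - a^2 := by rw [hbdef]; exact Real.sq_sqrt hRa
    obtain ⟨hyn2, hyd2⟩ := hkey b hb0 hb2
    have hbr0 : 0 ≤ b/R := div_nonneg hb0 hR.le
    obtain ⟨y, hydef⟩ : ∃ y : EuclideanSpace ℝ (Fin (m+1)),
        y = (w : EuclideanSpace ℝ (Fin (m+1))) + (b/R) • x := ⟨_, rfl⟩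
    have hinner : inner ℝ (w : EuclideanSpace ℝ (Fin (m+1))) x = (0:ℝ) := by
      have hw2 := w.2
      rw [Submodule.mem_orthogonal] at hw2
      have h := hw2 x (Submodule.mem_span_singleton_self x)
      rw [real_inner_comm] at h
      exact h
    have hsq : ‖y‖^2 = a^2 + b^2 := by
      rw [hydef, norm_add_sq_real, real_inner_smul_right, hinner, norm_smul,
        Real.norm_eq_abs, abs_of_nonneg hbr0, hx, ← hadef, div_mul_cancel₀ b hR.ne']
      ring
    have hyn : ‖y‖ = R := by
      have h1 : ‖y‖^2 = R^2 := by rw [hsq]; exact hyn2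
      calc ‖y‖ = Real.sqrt (‖y‖^2) := (Real.sqrt_sq (norm_nonneg y)).symm
        _ = Real.sqrt (R^2) := by rw [h1]
        _ = R := Real.sqrt_sq hR.le
    have hyd : dist y x ≤ r := by
      have hyx : y - x = (w : EuclideanSpace ℝ (Fin (m+1))) + (b/R - 1) • x := by
        rw [hydef, sub_smul, one_smul]; abel
      have hfr : (|b/R - 1| * R)^2 = (R - b)^2 := by
        rw [mul_pow, sq_abs]
        field_simp
        ring
      have hsq2 : ‖y - x‖^2 = a^2 + (R - b)^2 := by
        rw [hyx, norm_add_sq_real, real_inner_smul_right, hinner, norm_smul,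
          Real.norm_eq_abs, hx, ← hadef, hfr]
        ring
      rw [dist_eq_norm]
      exact aux_le_of_sq (norm_nonneg _) hr0.le (by rw [hsq2]; exact hyd2)
    have hQy : Q y = u := by
      rw [hQdef]
      simp only
      rw [hydef]
      have hPy : P ((w : EuclideanSpace ℝ (Fin (m+1))) + (b/R) • x)
          = w + (b/R) • (P x) := by
        rw [map_add, P.map_smul, Submodule.orthogonalProjectionOnto_mem_subspace_eq_self]
      rw [hPy, hPdef, Submodule.orthogonalProjectionOnto_apply_of_mem_orthogonal hxH]
      rw [smul_zero, add_zero, hwdef]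
      exact e.apply_symm_apply u
    refine ⟨y, ⟨?_, ?_⟩, hQy⟩
    · rw [mem_sphere_zero_iff_norm]; exact hyn
    · rw [mem_closedBall]; exact hyd
  calc ENNReal.ofReal ((r/(m+1))^m)
      = ENNReal.ofReal ((2 * ((r/2)/(m+1)))^m) := by congr 1; ring
    _ ≤ μH[(m:ℝ)] (ball (0 : EuclideanSpace ℝ (Fin m)) (r/2)) :=
        aux_ball_lower m (r/2) (by positivity)
    _ ≤ μH[(m:ℝ)] (Q '' (sphere (0 : EuclideanSpace ℝ (Fin (m+1))) R ∩ closedBall x r)) :=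
        measure_mono hball
    _ ≤ (1:ℝ≥0∞) ^ (m:ℝ) *
        μH[(m:ℝ)] (sphere (0 : EuclideanSpace ℝ (Fin (m+1))) R ∩ closedBall x r) := by
        simpa using hQlip.hausdorffMeasure_image_le (by positivity) _
    _ = μH[(m:ℝ)] (sphere (0 : EuclideanSpace ℝ (Fin (m+1))) R ∩ closedBall x r) := by simp

/-- There are constants `c > 0` and `δ > 0` such that for every
`x ∈ S_R` and all times `0 < t₁ < t₂` with `t₂ - t₁ < δ`, the surface integral of the
heat kernel satisfies `∫_{S_R} Γ(x-y, t₂-t₁) ds_y ≥ c / √(t₂-t₁)`. -/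
theorem heatKernel_sphere_integral_lower_bound
    (n : ℕ) (hn : 0 < n) (R : ℝ) (hR : 0 < R) :
    ∃ c > 0, ∃ δ > 0, ∀ x ∈ sphere (0 : EuclideanSpace ℝ (Fin n)) R,
      ∀ t₁ t₂ : ℝ, 0 < t₁ → t₁ < t₂ → t₂ - t₁ < δ →
      c / Real.sqrt (t₂ - t₁) ≤
        ∫ y in sphere (0 : EuclideanSpace ℝ (Fin n)) R,
          heatKernel n (x - y) (t₂ - t₁) ∂μH[(n : ℝ) - 1] := by
  obtain ⟨m, rfl⟩ : ∃ m, n = m + 1 := ⟨n - 1, (Nat.succ_pred_eq_of_pos hn).symm⟩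
  have hd : ((m+1 : ℕ) : ℝ) - 1 = (m : ℝ) := by push_cast; ring
  set c : ℝ := (4*π) ^ (-((m+1 : ℕ) : ℝ)/2) * Real.exp (-(1/4)) * (1/(m+1 : ℝ))^m with hc
  have hc0 : 0 < c := by
    apply mul_pos (mul_pos (Real.rpow_pos_of_pos (by positivity) _) (Real.exp_pos _))
    positivity
  refine ⟨c, hc0, min (R^2) 1, by positivity, fun x hx t₁ t₂ ht₁ ht₁₂ htδ => ?_⟩
  rw [hd]
  rw [mem_sphere_zero_iff_norm] at hx
  set s : ℝ := t₂ - t₁ with hsdef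
  have hs : 0 < s := by simp [hsdef]; linarith
  have hsR : s ≤ R^2 := le_of_lt (lt_of_lt_of_le htδ (min_le_left _ _))
  set r : ℝ := Real.sqrt s with hrdef
  have hr0 : 0 < r := Real.sqrt_pos.2 hs
  have hrR : r ≤ R := by
    rw [hrdef]
    calc Real.sqrt s ≤ Real.sqrt (R^2) := Real.sqrt_le_sqrt hsR
      _ = R := Real.sqrt_sq hR.le
  have hr2 : r^2 = s := Real.sq_sqrt hs.le
  set S := sphere (0 : EuclideanSpace ℝ (Fin (m+1))) R with hSdef
  set μ : Measure (EuclideanSpace ℝ (Fin (m+1))) := μH[(m:ℝ)] with hμdef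
  have hSfin : μ S < ⊤ := aux_sphere_finite m R hR (aux_supsphere m R hR)
  set cap := S ∩ closedBall x r with hcapdef
  have hcapm : MeasurableSet cap :=
    ((isClosed_sphere).inter isClosed_closedBall).measurableSet
  have hcapfin : μ cap ≠ ⊤ := (lt_of_le_of_lt (measure_mono inter_subset_left) hSfin).ne
  -- the function and its bound
  set M : ℝ := (4 * π * s) ^ (-((m+1 : ℕ) : ℝ)/2) with hM
  have hM0 : 0 < M := Real.rpow_pos_of_pos (by positivity) _
  set f : EuclideanSpace ℝ (Fin (m+1)) → ℝ := fun y => heatKernel (m+1) (x - y) s with hf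
  have hfeq : ∀ y, f y = M * Real.exp (-‖x - y‖^2 / (4*s)) := by
    intro y
    rw [hf]
    simp only [heatKernel, if_pos hs, hM]
  have hfnn : ∀ y, 0 ≤ f y := by
    intro y; rw [hfeq]; positivity
  have hfcont : Continuous f := by
    have : f = fun y => M * Real.exp (-‖x - y‖^2 / (4*s)) := funext hfeq
    rw [this]
    refine continuous_const.mul (Real.continuous_exp.comp ?_)
    exact (((continuous_const.sub continuous_id).norm.pow 2).neg).div_const (4*s)
  have hfle : ∀ y, f y ≤ M := by
    intro y
    rw [hfeq]
    nth_rewrite 2 [← mul_one M]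
    refine mul_le_mul_of_nonneg_left ?_ hM0.le
    rw [Real.exp_le_one_iff]
    have : (0:ℝ) ≤ ‖x - y‖^2 / (4*s) := by positivity
    rw [neg_div]
    linarith
  have hInt : IntegrableOn f S μ := by
    have hconst : IntegrableOn (fun _ => M) S μ := integrableOn_const hSfin.ne
    refine hconst.mono' hfcont.aestronglyMeasurable.restrict ?_
    exact Filter.Eventually.of_forall fun y => by
      rw [Real.norm_eq_abs, abs_of_nonneg (hfnn y)]; exact hfle y
  have hIntCap : IntegrableOn f cap μ := hInt.mono_set inter_subset_left
  -- pointwise lower bound on the cap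
  have hptwise : ∀ y ∈ cap, M * Real.exp (-(1/4)) ≤ f y := by
    intro y hy
    obtain ⟨hyS, hyB⟩ := hy
    rw [mem_closedBall] at hyB
    have hxy : ‖x - y‖ ≤ r := by
      rw [← dist_eq_norm, dist_comm]
      exact hyB
    rw [hfeq]
    refine mul_le_mul_of_nonneg_left ?_ hM0.le
    apply Real.exp_le_exp.2
    rw [neg_div, neg_le_neg_iff]
    rw [div_le_iff₀ (by positivity)]
    calc ‖x - y‖^2 ≤ r^2 := by
          apply pow_le_pow_left₀ (norm_nonneg _) hxy
      _ = s := hr2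
      _ = 1/4 * (4*s) := by ring
  -- chain of inequalities
  have step2 : M * Real.exp (-(1/4)) * (μ cap).toReal ≤ ∫ y in cap, f y ∂μ :=
    setIntegral_ge_of_const_le_real hcapm hcapfin hptwise hIntCap
  have step1 : ∫ y in cap, f y ∂μ ≤ ∫ y in S, f y ∂μ := by
    refine setIntegral_mono_set hInt ?_ (HasSubset.Subset.eventuallyLE inter_subset_left)
    exact Filter.Eventually.of_forall fun y => hfnn y
  have step3 : (r/(m+1))^m ≤ (μ cap).toReal := by
    have h := aux_cap_lower m R hR x hx r hr0 hrR
    have h2 := ENNReal.toReal_mono hcapfin h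
    rwa [ENNReal.toReal_ofReal (by positivity)] at h2
  -- arithmetic: c / √s = M * exp(-(1/4)) * (r/(m+1))^m
  have harith : c / Real.sqrt s = M * Real.exp (-(1/4)) * (r/(m+1))^m := by
    have e1 : M = (4*π) ^ (-((m+1 : ℕ) : ℝ)/2) * s ^ (-((m+1 : ℕ) : ℝ)/2) := by
      rw [hM, ← Real.mul_rpow (by positivity) hs.le]
    have e2 : r^m = s ^ ((m:ℝ)/2) := by
      rw [hrdef, Real.sqrt_eq_rpow, ← Real.rpow_natCast (s ^ ((1:ℝ)/2)) m,
        ← Real.rpow_mul hs.le]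
      congr 1
      ring
    have e3 : s ^ (-((m+1 : ℕ) : ℝ)/2) * s ^ ((m:ℝ)/2) = s ^ (-(1:ℝ)/2) := by
      rw [← Real.rpow_add hs]
      congr 1
      push_cast
      ring
    have e4 : c / Real.sqrt s = c * s ^ (-(1:ℝ)/2) := by
      rw [Real.sqrt_eq_rpow, div_eq_mul_inv, ← Real.rpow_neg hs.le]
      norm_num
    rw [e4, hc, e1]
    simp only [div_pow, one_pow]
    rw [e2]
    linear_combination (-((4*π) ^ (-((m+1 : ℕ) : ℝ)/2) * Real.exp (-(1/4)) /
      ((m:ℝ)+1)^m)) * e3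
  calc c / Real.sqrt s = M * Real.exp (-(1/4)) * (r/(m+1))^m := harith
    _ ≤ M * Real.exp (-(1/4)) * (μ cap).toReal := by
        refine mul_le_mul_of_nonneg_left step3 (by positivity)
    _ ≤ ∫ y in cap, f y ∂μ := step2
    _ ≤ ∫ y in S, f y ∂μ := step1
end
end

section
/- Let w be a continuous function on \overline{B}_R × [0,T) satisfying the heat equation w_t = Δw in B_R × (0,T) and the boundary growth bound w(x,t) ≤ C(T−t)^{−m} for all (x,t) ∈ S_R × (0,T), where C > 0 and m > 0. Then for every 0 < a < R, sup{ w(x,t) : |x| ≤ a, 0 ≤ t < T } < ∞; in fact this supremum is at most C₁(R²−a²)^{−2m} for some constant C₁ > 0 depending on C, m, n, R, T and w(·,0). -/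
open MeasureTheory Metric Real Set Filter
open scoped Topology

noncomputable section

set_option maxHeartbeats 2000000

/- ### Auxiliary lemmas -/

/-- Necessary second-derivative test: at an interior local maximum the second
derivative is nonpositive. -/
lemma HeatAux.secondtest {g g' : ℝ → ℝ} {a : ℝ}
    (hg : ∀ᶠ s in 𝓝 (0:ℝ), HasDerivAt g (g' s) s)
    (hg' : HasDerivAt g' a 0) (hmax : IsLocalMax g 0) : a ≤ 0 := by
  by_contra h
  push_neg at h
  have h0 : g' 0 = 0 := hmax.hasDerivAt_eq_zero hg.self_of_nhds
  have hslope := hasDerivAt_iff_tendsto_slope.1 hg'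
  have hpos : ∀ᶠ s in 𝓝[>] (0:ℝ), 0 < g' s := by
    have h1 : ∀ᶠ s in 𝓝[≠] (0:ℝ), 0 < slope g' 0 s :=
      hslope.eventually (eventually_gt_nhds h)
    have h2 : ∀ᶠ s in 𝓝[>] (0:ℝ), 0 < slope g' 0 s :=
      h1.filter_mono (nhdsWithin_mono _ (fun s hs => ne_of_gt hs))
    filter_upwards [h2, self_mem_nhdsWithin] with s hs hs'
    have : slope g' 0 s = g' s / s := by simp [slope_def_field, h0]
    rw [this] at hs
    have := mul_pos hs (show (0:ℝ) < s from hs')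
    rwa [div_mul_cancel₀] at this
    exact ne_of_gt hs'
  rw [eventually_nhdsWithin_iff] at hpos
  have hall : ∀ᶠ s in 𝓝 (0:ℝ),
      HasDerivAt g (g' s) s ∧ g s ≤ g 0 ∧ (s ∈ Ioi (0:ℝ) → 0 < g' s) :=
    hg.and (hmax.and hpos)
  rw [Metric.eventually_nhds_iff] at hall
  obtain ⟨ε, hε, hE⟩ := hall
  set δ := ε/2 with hδdef
  have hδ : 0 < δ := by positivity
  have hmem : ∀ s ∈ Icc (0:ℝ) δ, dist s 0 < ε := by
    intro s hs
    rw [Real.dist_eq, sub_zero, abs_of_nonneg hs.1]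
    linarith [hs.2]
  have hsm : StrictMonoOn g (Icc (0:ℝ) δ) := by
    apply strictMonoOn_of_deriv_pos (convex_Icc _ _)
    · intro s hs
      exact ((hE (hmem s hs)).1.differentiableAt.continuousAt).continuousWithinAt
    · intro s hs
      rw [interior_Icc] at hs
      rw [(hE (hmem s ⟨le_of_lt hs.1, le_of_lt hs.2⟩)).1.deriv]
      exact (hE (hmem s ⟨le_of_lt hs.1, le_of_lt hs.2⟩)).2.2 hs.1
  have h1 : g 0 < g δ := hsm (left_mem_Icc.2 (le_of_lt hδ)) (right_mem_Icc.2 (le_of_lt hδ)) hδ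
  have h2 : g δ ≤ g 0 := (hE (hmem δ (right_mem_Icc.2 (le_of_lt hδ)))).2.1
  linarith

/-- At a maximum over `[0, t₀]` attained at the right endpoint, the derivative
is nonnegative. -/
lemma HeatAux.deriv_nonneg_of_left_max (f : ℝ → ℝ) (d t₀ : ℝ) (hd : HasDerivAt f d t₀)
    (ht₀ : 0 < t₀) (hmax : ∀ t ∈ Icc 0 t₀, f t ≤ f t₀) : 0 ≤ d := by
  have hm : IsLocalMaxOn f (Icc 0 t₀) t₀ :=
    IsMaxOn.localize (fun t ht => hmax t ht)
  have hc : (-t₀) ∈ posTangentConeAt (Icc (0:ℝ) t₀) t₀ := by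
    apply mem_posTangentConeAt_of_segment_subset
    rw [show t₀ + -t₀ = (0:ℝ) by ring, segment_eq_Icc']
    rw [min_eq_right (le_of_lt ht₀), max_eq_left (le_of_lt ht₀)]
  have h2 := hm.hasFDerivWithinAt_nonpos hd.hasFDerivAt.hasFDerivWithinAt hc
  simp at h2
  nlinarith

section LineLemmas

variable {E : Type*} [NormedAddCommGroup E] [NormedSpace ℝ E]

lemma HeatAux.line_hasDerivAt {f : E → ℝ} {U : Set E} (hU : IsOpen U) (hf : ContDiffOn ℝ 2 f U)
    {x : E} (hx : x ∈ U) (e : E) :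
    ∀ᶠ s in 𝓝 (0:ℝ), HasDerivAt (fun s : ℝ => f (x + s • e)) (fderiv ℝ f (x + s • e) e) s := by
  have hline : Continuous (fun s : ℝ => x + s • e) := by continuity
  have hev : ∀ᶠ s in 𝓝 (0:ℝ), x + s • e ∈ U := by
    have : (fun s : ℝ => x + s • e) ⁻¹' U ∈ 𝓝 (0:ℝ) :=
      hline.continuousAt.preimage_mem_nhds (hU.mem_nhds (by simpa using hx))
    exact this
  filter_upwards [hev] with s hs
  have hdf : DifferentiableAt ℝ f (x + s • e) :=
    ((hf.differentiableOn (by norm_num)).differentiableAt (hU.mem_nhds hs))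
  have hl : HasDerivAt (fun s : ℝ => x + s • e) e s := by
    simpa using ((hasDerivAt_id s).smul_const e).const_add x
  exact hdf.hasFDerivAt.comp_hasDerivAt s hl

lemma HeatAux.line_hasDerivAt_two {f : E → ℝ} {U : Set E} (hU : IsOpen U)
    (hf : ContDiffOn ℝ 2 f U) {x : E} (hx : x ∈ U) (e : E) :
    HasDerivAt (fun s : ℝ => fderiv ℝ f (x + s • e) e)
      (fderiv ℝ (fun y => fderiv ℝ f y e) x e) 0 := by
  have hdF : DifferentiableAt ℝ (fun y => fderiv ℝ f y e) x := by
    have h1 : DifferentiableAt ℝ (fderiv ℝ f) x :=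
      ((hf.fderiv_of_isOpen (m := 1) hU (by norm_num)).differentiableOn (by norm_num)).differentiableAt (hU.mem_nhds hx)
    exact (ContinuousLinearMap.apply ℝ ℝ e).differentiable.differentiableAt.comp x h1
  have hl : HasDerivAt (fun s : ℝ => x + s • e) e (0:ℝ) := by
    simpa using ((hasDerivAt_id (0:ℝ)).smul_const e).const_add x
  have hdF' : HasFDerivAt (fun y => fderiv ℝ f y e)
      (fderiv ℝ (fun y => fderiv ℝ f y e) x) (x + (0:ℝ) • e) := by
    simpa using hdF.hasFDerivAt
  exact hdF'.comp_hasDerivAt (0:ℝ) hl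

end LineLemmas

/-- Explicit first derivative of the barrier along a line. -/
lemma HeatAux.vline1 (A m κ c b : ℝ) (hκ : 0 < κ) (s : ℝ) :
    HasDerivAt (fun s : ℝ => A * ((c - 2*b*s - s^2)^2 + κ) ^ (-m))
      (A * ((2*(c - 2*b*s - s^2)*(-(2*b) - 2*s)) * ((-m) * ((c - 2*b*s - s^2)^2 + κ)^(-m-1)))) s := by
  have h1 : HasDerivAt (fun s : ℝ => 2*b*s) (2*b) s := by
    simpa using (hasDerivAt_id s).const_mul (2*b)
  have h2 : HasDerivAt (fun s : ℝ => s^2) (2*s) s := by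
    simpa using hasDerivAt_pow 2 s
  have hp : HasDerivAt (fun s : ℝ => c - 2*b*s - s^2) (-(2*b) - 2*s) s := by
    exact (((hasDerivAt_const s c).sub h1).sub h2).congr_deriv (by ring)
  have hq : HasDerivAt (fun s : ℝ => (c - 2*b*s - s^2)^2 + κ)
      (2*(c - 2*b*s - s^2)*(-(2*b) - 2*s)) s := by
    have := hp.pow 2
    simpa [mul_comm, mul_assoc, mul_left_comm] using this.add_const κ
  have hqpos : (0:ℝ) < (c - 2*b*s - s^2)^2 + κ := by positivity
  have hr := hq.rpow_const (p := -m) (Or.inl (ne_of_gt hqpos))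
  simpa [mul_comm, mul_assoc, mul_left_comm] using hr.const_mul A

/-- Explicit second derivative of the barrier along a line, at the center. -/
lemma HeatAux.vline2 (A m κ c b : ℝ) (hκ : 0 < κ) :
    HasDerivAt (fun s : ℝ =>
        A * ((2*(c - 2*b*s - s^2)*(-(2*b) - 2*s)) * ((-m) * ((c - 2*b*s - s^2)^2 + κ)^(-m-1))))
      ((4*c - 8*b^2) * (A * m * (c^2+κ)^(-m-1))
        + b^2 * (16*c^2*(m+1)) * (A * m * (c^2+κ)^(-m-2))) 0 := by
  have h1 : HasDerivAt (fun s : ℝ => 2*b*s) (2*b) 0 := by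
    simpa using (hasDerivAt_id (0:ℝ)).const_mul (2*b)
  have h2 : HasDerivAt (fun s : ℝ => s^2) (2*(0:ℝ)) 0 := by
    simpa using hasDerivAt_pow 2 (0:ℝ)
  have hp : HasDerivAt (fun s : ℝ => c - 2*b*s - s^2) (-(2*b) - 2*0) 0 := by
    exact (((hasDerivAt_const (0:ℝ) c).sub h1).sub h2).congr_deriv (by ring)
  have hG : HasDerivAt (fun s : ℝ => 2*(c - 2*b*s - s^2)*(-(2*b) - 2*s))
      (2*(-(2*b) - 2*0)*(-(2*b) - 2*0) + 2*(c - 2*b*0 - 0^2)*(-2)) 0 := by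
    have ha : HasDerivAt (fun s : ℝ => 2*(c - 2*b*s - s^2)) (2*(-(2*b) - 2*0)) 0 :=
      hp.const_mul 2
    have hb : HasDerivAt (fun s : ℝ => -(2*b) - 2*s) (-2 : ℝ) 0 := by
      exact ((hasDerivAt_const (0:ℝ) (-(2*b))).sub ((hasDerivAt_id (0:ℝ)).const_mul 2)).congr_deriv (by ring)
    exact ha.mul hb
  have hqpos : (0:ℝ) < (c - 2*b*0 - 0^2)^2 + κ := by positivity
  have hq : HasDerivAt (fun s : ℝ => (c - 2*b*s - s^2)^2 + κ)
      (2*(c - 2*b*0 - 0^2)*(-(2*b) - 2*0)) 0 := by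
    have := hp.pow 2
    simpa [mul_comm, mul_assoc, mul_left_comm] using this.add_const κ
  have hH := (hq.rpow_const (p := -m-1) (Or.inl (ne_of_gt hqpos))).const_mul (-m)
  have hGH := hG.mul hH
  have := hGH.const_mul A
  refine this.congr_deriv ?_
  norm_num
  ring_nf

/-- Explicit time derivative of the barrier. -/
lemma HeatAux.vtime (A m β c T t₀ : ℝ) (h : 0 < c^2 + β*(T - t₀)) :
    HasDerivAt (fun t : ℝ => A * (c^2 + β*(T - t))^(-m))
      (A * m * β * (c^2+β*(T-t₀))^(-m-1)) t₀ := by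
  have hin : HasDerivAt (fun t : ℝ => c^2 + β*(T - t)) (-β) t₀ := by
    simpa using (((hasDerivAt_const t₀ T).sub (hasDerivAt_id t₀)).const_mul β).const_add (c^2)
  have := (hin.rpow_const (p := -m) (Or.inl (ne_of_gt h))).const_mul A
  refine this.congr_deriv ?_
  ring_nf

lemma HeatAux.barrier_ineq (n m A c S ρ X R β : ℝ) (hA : 0 < A) (hm : 0 < m) (hρ : 0 < ρ)
    (hX : 0 < X) (hc0 : 0 ≤ c) (hcR : c ≤ R^2) (hS0 : 0 ≤ S) (hSR : S ≤ R^2)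
    (hc2 : c^2 ≤ ρ) (hn : 0 ≤ n) (hβ : β = (16*(m+1) + 4*n)*R^2 + 1) :
    (4*n*c - 8*S) * (A*m*(X*ρ)) + S*(16*c^2*(m+1))*(A*m*X) < A*m*β*(X*ρ) := by
  have hAmX : 0 < A*m*X := by positivity
  have hR2 : 0 ≤ R^2 := le_trans hc0 hcR
  have k1 : S*c^2 ≤ R^2*ρ := le_trans (mul_le_mul_of_nonneg_right hSR (sq_nonneg c))
    (mul_le_mul_of_nonneg_left hc2 hR2)
  have k2 : n*c*ρ ≤ n*R^2*ρ :=
    mul_le_mul_of_nonneg_right (mul_le_mul_of_nonneg_left hcR hn) (le_of_lt hρ)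
  have k3 : 0 ≤ S * (A*m*(X*ρ)) := by positivity
  nlinarith [mul_le_mul_of_nonneg_left k1 (by positivity : (0:ℝ) ≤ 16*(m+1)*(A*m*X)),
    mul_le_mul_of_nonneg_left k2 (by positivity : (0:ℝ) ≤ 4*(A*m*X)), hAmX, mul_pos hAmX hρ]

lemma HeatAux.sum_sq (n : ℕ) (x : EuclideanSpace ℝ (Fin n)) : ∑ i, (x i)^2 = ‖x‖^2 := by
  rw [EuclideanSpace.norm_eq, Real.sq_sqrt (by positivity)]
  simp [sq_abs]

lemma HeatAux.sum_helper (n : ℕ) (x : EuclideanSpace ℝ (Fin n)) (c Q P K1 : ℝ) :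
    ∑ i : Fin n, ((4*c - 8*(x i)^2) * Q + (x i)^2 * K1 * P)
      = (4*(n:ℝ)*c - 8*‖x‖^2) * Q + ‖x‖^2 * K1 * P := by
  have hsum : ∑ i : Fin n, (x i)^2 = ‖x‖^2 := HeatAux.sum_sq n x
  simp only [sub_mul, add_mul, Finset.sum_add_distrib, Finset.sum_sub_distrib, mul_assoc,
    ← Finset.sum_mul, hsum, Finset.sum_const, Finset.card_univ, Fintype.card_fin, nsmul_eq_mul]
  have h2 : ∑ i : Fin n, 8 * ((x i)^2 * Q) = 8 * (‖x‖^2 * Q) := by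
    rw [← Finset.mul_sum, ← Finset.sum_mul, hsum]
  rw [h2]
  ring

lemma HeatAux.line_norm (n : ℕ) (x : EuclideanSpace ℝ (Fin n)) (i : Fin n) (s R : ℝ) :
    R^2 - ‖x + s • EuclideanSpace.single i 1‖^2 = (R^2 - ‖x‖^2) - 2*(x i)*s - s^2 := by
  rw [norm_add_sq_real, real_inner_smul_right, EuclideanSpace.inner_single_right, norm_smul]
  simp [mul_pow]
  ring

/-- Let `w` be continuous on `B̄_R × [0,T)`, satisfy the heat equation
in `B_R × (0,T)`, and satisfy `w(x,t) ≤ C (T-t)^{-m}` on `S_R × (0,T)` with `C, m > 0`.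
Then for every `0 < a < R`, `w` is bounded above on `{|x| ≤ a} × [0,T)`, by
`C₁ (R² - a²)^{-2m}` for some constant `C₁ > 0`. -/
theorem heat_no_interior_blowup_of_boundary_bound
    (n : ℕ) (R T C m : ℝ) (hn : 0 < n) (hR : 0 < R) (hT : 0 < T) (hC : 0 < C) (hm : 0 < m)
    (w : EuclideanSpace ℝ (Fin n) → ℝ → ℝ)
    (hw_cont : ContinuousOn (fun z : EuclideanSpace ℝ (Fin n) × ℝ => w z.1 z.2)
      (closedBall 0 R ×ˢ Ico 0 T))
    (hw_x : ∀ t ∈ Ioo (0 : ℝ) T, ContDiffOn ℝ 2 (fun x => w x t) (ball 0 R))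
    (hw_t : ∀ x ∈ ball (0 : EuclideanSpace ℝ (Fin n)) R, ∀ t ∈ Ioo (0 : ℝ) T,
      DifferentiableAt ℝ (w x) t)
    (hw_heat : ∀ x ∈ ball (0 : EuclideanSpace ℝ (Fin n)) R, ∀ t ∈ Ioo (0 : ℝ) T,
      deriv (w x) t = lap n (fun y => w y t) x)
    (hw_bd : ∀ x ∈ sphere (0 : EuclideanSpace ℝ (Fin n)) R, ∀ t ∈ Ioo (0 : ℝ) T,
      w x t ≤ C * (T - t) ^ (-m)) :
    ∀ a : ℝ, 0 < a → a < R →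
      ∃ C₁ > 0, (∀ x : EuclideanSpace ℝ (Fin n), ‖x‖ ≤ a → ∀ t ∈ Ico (0 : ℝ) T,
        w x t ≤ C₁ * (R ^ 2 - a ^ 2) ^ (-(2 * m))) ∧
      BddAbove {y : ℝ | ∃ x : EuclideanSpace ℝ (Fin n), ∃ t ∈ Ico (0 : ℝ) T,
        ‖x‖ ≤ a ∧ y = w x t} := by
  intro a ha haR
  -- constants
  set β : ℝ := (16*(m+1) + 4*(n:ℝ))*R^2 + 1 with hβdef
  have hβ : 0 < β := by positivity
  -- maximum of the initial data
  have hcont0 : ContinuousOn (fun x : EuclideanSpace ℝ (Fin n) => w x 0) (closedBall 0 R) := by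
    have heq : (fun x : EuclideanSpace ℝ (Fin n) => w x 0)
        = (fun z : EuclideanSpace ℝ (Fin n) × ℝ => w z.1 z.2) ∘ (fun x => (x, (0:ℝ))) := rfl
    rw [heq]
    apply hw_cont.comp (Continuous.continuousOn (by continuity))
    intro x hx
    exact ⟨hx, ⟨le_refl 0, hT⟩⟩
  obtain ⟨xm, hxm, hxmax⟩ := (isCompact_closedBall (0 : EuclideanSpace ℝ (Fin n)) R).exists_isMaxOn
      ⟨0, mem_closedBall_self (le_of_lt hR)⟩ hcont0
  have hRT4 : (0:ℝ) < R^4 + β*T := by positivity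
  obtain ⟨M, hM, hMw⟩ : ∃ M : ℝ, 0 < M ∧
      ∀ x ∈ closedBall (0 : EuclideanSpace ℝ (Fin n)) R, w x 0 ≤ M - 1 := by
    refine ⟨max (w xm 0) 0 + 1, ?_, ?_⟩
    · have := le_max_right (w xm 0) 0
      linarith
    · intro x hx
      have h1 : w x 0 ≤ w xm 0 := hxmax hx
      have h2 := le_max_left (w xm 0) 0
      linarith
  obtain ⟨A, hA, hACβ, hAM⟩ : ∃ A : ℝ, 0 < A ∧ C * β^m ≤ A ∧ M * (R^4 + β*T)^m ≤ A := by
    have h1 : (0:ℝ) < C * β^m := mul_pos hC (Real.rpow_pos_of_pos hβ m)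
    have h2 : (0:ℝ) < M * (R^4 + β*T)^m := mul_pos hM (Real.rpow_pos_of_pos hRT4 m)
    exact ⟨C * β^m + M * (R^4 + β*T)^m, by linarith, by linarith, by linarith⟩
  set v : EuclideanSpace ℝ (Fin n) → ℝ → ℝ :=
    fun x t => A * (((R^2 - ‖x‖^2)^2 + β*(T - t)) ^ (-m)) with hvdef
  -- comparison with the barrier
  have hcomp : ∀ x ∈ closedBall (0:EuclideanSpace ℝ (Fin n)) R, ∀ t, 0 ≤ t → t < T →
      w x t ≤ v x t := by
    intro x hx t ht0 htT
    set t₁ : ℝ := (t + T)/2 with ht₁def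
    have ht₁0 : 0 < t₁ := by simp only [ht₁def]; linarith
    have htt₁ : t ≤ t₁ := by simp only [ht₁def]; linarith
    have ht₁T : t₁ < T := by simp only [ht₁def]; linarith
    set K : Set (EuclideanSpace ℝ (Fin n) × ℝ) := closedBall 0 R ×ˢ Icc 0 t₁ with hKdef
    have hKsub : K ⊆ closedBall 0 R ×ˢ Ico 0 T := by
      apply Set.prod_mono_right
      exact fun s hs => ⟨hs.1, lt_of_le_of_lt hs.2 ht₁T⟩
    set u : EuclideanSpace ℝ (Fin n) × ℝ → ℝ := fun z => w z.1 z.2 - v z.1 z.2 with hudef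
    have hbase : Continuous (fun z : EuclideanSpace ℝ (Fin n) × ℝ =>
        (R^2 - ‖z.1‖^2)^2 + β*(T - z.2)) :=
      ((continuous_const.sub ((continuous_norm.comp continuous_fst).pow 2)).pow 2).add
        (continuous_const.mul (continuous_const.sub continuous_snd))
    have hbasepos : ∀ z ∈ K, 0 < (R^2 - ‖z.1‖^2)^2 + β*(T - z.2) := by
      intro z hz
      have h1 : z.2 ≤ t₁ := hz.2.2
      have : 0 < β*(T - z.2) := mul_pos hβ (by linarith)
      positivity
    have huK : ContinuousOn u K := by
      apply (hw_cont.mono hKsub).sub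
      apply continuousOn_const.mul
      exact ContinuousOn.rpow_const hbase.continuousOn
        (fun z hz => Or.inl (ne_of_gt (hbasepos z hz)))
    have hnK : K.Nonempty := ⟨(0, 0), ⟨mem_closedBall_self (le_of_lt hR), le_refl 0,
      le_of_lt ht₁0⟩⟩
    obtain ⟨⟨x₀, t₀⟩, hz₀K, hz₀max⟩ :=
      ((isCompact_closedBall _ _).prod isCompact_Icc).exists_isMaxOn hnK huK
    suffices hneg : u (x₀, t₀) ≤ 0 by
      have hxtK : (x, t) ∈ K := ⟨hx, ⟨ht0, htt₁⟩⟩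
      have := hz₀max hxtK
      simp only [hudef, mem_setOf_eq] at this hneg ⊢
      linarith
    by_contra hpos0
    push_neg at hpos0
    have hx₀R : ‖x₀‖ ≤ R := by
      have := hz₀K.1; rwa [mem_closedBall_zero_iff] at this
    have ht₀0 : 0 ≤ t₀ := hz₀K.2.1
    have ht₀t₁ : t₀ ≤ t₁ := hz₀K.2.2
    have ht₀T : t₀ < T := lt_of_le_of_lt ht₀t₁ ht₁T
    have hupos : 0 < w x₀ t₀ - v x₀ t₀ := hpos0
    -- rule out t₀ = 0
    have ht₀pos : 0 < t₀ := by
      rcases lt_or_eq_of_le ht₀0 with h | h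
      · exact h
      · exfalso
        have hw0 : w x₀ 0 ≤ M - 1 := hMw x₀ hz₀K.1
        have hvlb : M ≤ v x₀ 0 := by
          have hnn := norm_nonneg x₀
          have hcx : 0 ≤ R^2 - ‖x₀‖^2 := by nlinarith
          have hcx2 : (R^2 - ‖x₀‖^2)^2 + β*(T - 0) ≤ R^4 + β*T := by nlinarith
          have hpos2 : (0:ℝ) < (R^2 - ‖x₀‖^2)^2 + β*(T - 0) := by
            have : (0:ℝ) < β*(T - 0) := by rw [sub_zero]; exact mul_pos hβ hT
            nlinarith [sq_nonneg (R^2 - ‖x₀‖^2)]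
          have h3 : (R^4 + β*T)^(-m) ≤ ((R^2 - ‖x₀‖^2)^2 + β*(T - 0))^(-m) :=
            Real.rpow_le_rpow_of_nonpos hpos2 hcx2 (by linarith)
          have h4 : M * ((R^4 + β*T)^m * (R^4 + β*T)^(-m)) = M := by
            rw [← Real.rpow_add hRT4]
            simp
          have h5 : M * (R^4 + β*T)^m * (R^4 + β*T)^(-m) ≤ A * (R^4 + β*T)^(-m) :=
            mul_le_mul_of_nonneg_right hAM (le_of_lt (Real.rpow_pos_of_pos hRT4 _))
          rw [mul_assoc, h4] at h5
          calc M ≤ A * (R^4 + β*T)^(-m) := h5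
            _ ≤ A * ((R^2 - ‖x₀‖^2)^2 + β*(T - 0))^(-m) :=
                mul_le_mul_of_nonneg_left h3 (le_of_lt hA)
            _ = v x₀ 0 := by rw [hvdef]
        rw [← h] at hupos
        linarith
    have ht₀mem : t₀ ∈ Ioo (0:ℝ) T := ⟨ht₀pos, ht₀T⟩
    -- rule out the boundary sphere
    have hx₀lt : ‖x₀‖ < R := by
      rcases lt_or_eq_of_le hx₀R with h | h
      · exact h
      · exfalso
        have hsph : x₀ ∈ sphere (0 : EuclideanSpace ℝ (Fin n)) R := by
          rwa [mem_sphere_zero_iff_norm]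
        have hwb := hw_bd x₀ hsph t₀ ht₀mem
        have hTt : 0 < T - t₀ := by linarith
        have hvval : v x₀ t₀ = A * (β^(-m) * (T - t₀)^(-m)) := by
          rw [hvdef]
          simp only [h]
          rw [show (R^2 - R^2)^2 + β*(T-t₀) = β*(T-t₀) by ring]
          rw [Real.mul_rpow (le_of_lt hβ) (le_of_lt hTt)]
        have hAC : C ≤ A * β^(-m) := by
          have h4 : C * (β^m * β^(-m)) = C := by
            rw [← Real.rpow_add hβ]; simp
          have h5 : C * β^m * β^(-m) ≤ A * β^(-m) :=
            mul_le_mul_of_nonneg_right hACβ (le_of_lt (Real.rpow_pos_of_pos hβ _))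
          rwa [mul_assoc, h4] at h5
        have : w x₀ t₀ ≤ v x₀ t₀ := by
          rw [hvval, ← mul_assoc]
          calc w x₀ t₀ ≤ C * (T - t₀)^(-m) := hwb
            _ ≤ A * β^(-m) * (T - t₀)^(-m) :=
                mul_le_mul_of_nonneg_right hAC (le_of_lt (Real.rpow_pos_of_pos hTt _))
        linarith
    -- interior case: the PDE argument
    have hx₀ball : x₀ ∈ ball (0 : EuclideanSpace ℝ (Fin n)) R := mem_ball_zero_iff.2 hx₀lt
    set c : ℝ := R^2 - ‖x₀‖^2 with hcdef
    set κ : ℝ := β*(T - t₀) with hκdef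
    have hκ : 0 < κ := mul_pos hβ (by linarith)
    have hc0 : 0 ≤ c := by simp only [hcdef]; nlinarith [norm_nonneg x₀]
    have hcR : c ≤ R^2 := by simp only [hcdef]; nlinarith [norm_nonneg x₀]
    set ρ : ℝ := c^2 + κ with hρdef
    have hρ : 0 < ρ := by positivity
    set vκ : EuclideanSpace ℝ (Fin n) → ℝ := fun y => A * ((R^2 - ‖y‖^2)^2 + κ)^(-m) with hvκdef
    have hvκ_smooth : ContDiffOn ℝ 2 vκ (ball 0 R) := by
      intro y _
      apply ContDiffWithinAt.mono _ (subset_univ _)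
      rw [contDiffWithinAt_univ]
      have hb : ContDiffAt ℝ 2 (fun y : EuclideanSpace ℝ (Fin n) =>
          (R^2 - ‖y‖^2)^2 + κ) y :=
        ((((contDiff_const.sub (contDiff_norm_sq ℝ)).pow 2).add contDiff_const)).contDiffAt
      have hbpos : (0:ℝ) < (R^2 - ‖y‖^2)^2 + κ := by positivity
      exact contDiffAt_const.mul (hb.rpow_const_of_ne (ne_of_gt hbpos))
    have hw₀smooth : ContDiffOn ℝ 2 (fun y => w y t₀) (ball 0 R) := hw_x t₀ ht₀mem
    -- the key per-coordinate inequality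
    have key : ∀ i : Fin n,
        fderiv ℝ (fun y => fderiv ℝ (fun y' => w y' t₀) y (EuclideanSpace.single i 1)) x₀
            (EuclideanSpace.single i 1)
          ≤ (4*c - 8*(x₀ i)^2) * (A * m * ρ^(-m-1))
              + (x₀ i)^2 * (16*c^2*(m+1)) * (A * m * ρ^(-m-2)) := by
      intro i
      set e : EuclideanSpace ℝ (Fin n) := EuclideanSpace.single i 1 with hedef
      set b : ℝ := x₀ i with hbdef
      have hline_eq : ∀ s : ℝ, R^2 - ‖x₀ + s • e‖^2 = c - 2*b*s - s^2 := by
        intro s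
        simp only [hedef, hbdef, hcdef]
        exact HeatAux.line_norm n x₀ i s R
      have hfun_eq : (fun s : ℝ => vκ (x₀ + s • e))
          = (fun s : ℝ => A * ((c - 2*b*s - s^2)^2 + κ)^(-m)) := by
        funext s
        simp only [hvκdef]
        rw [hline_eq s]
      have hv1 := HeatAux.line_hasDerivAt isOpen_ball hvκ_smooth hx₀ball e
      have hv2 := HeatAux.line_hasDerivAt_two isOpen_ball hvκ_smooth hx₀ball e
      have hw1 := HeatAux.line_hasDerivAt isOpen_ball hw₀smooth hx₀ball e
      have hw2 := HeatAux.line_hasDerivAt_two isOpen_ball hw₀smooth hx₀ball e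
      -- identify the derivative of vκ along the line
      have hexp1 : ∀ s : ℝ, HasDerivAt (fun s : ℝ => vκ (x₀ + s • e))
          (A * ((2*(c - 2*b*s - s^2)*(-(2*b) - 2*s))
            * ((-m) * ((c - 2*b*s - s^2)^2 + κ)^(-m-1)))) s := by
        intro s
        rw [hfun_eq]
        exact HeatAux.vline1 A m κ c b hκ s
      have heq' : (fun s : ℝ => fderiv ℝ vκ (x₀ + s • e) e) =ᶠ[𝓝 (0:ℝ)]
          (fun s : ℝ => A * ((2*(c - 2*b*s - s^2)*(-(2*b) - 2*s))
            * ((-m) * ((c - 2*b*s - s^2)^2 + κ)^(-m-1)))) := by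
        filter_upwards [hv1] with s hs
        exact hs.unique (hexp1 s)
      have hv2' : HasDerivAt (fun s : ℝ => A * ((2*(c - 2*b*s - s^2)*(-(2*b) - 2*s))
            * ((-m) * ((c - 2*b*s - s^2)^2 + κ)^(-m-1))))
          (fderiv ℝ (fun y => fderiv ℝ vκ y e) x₀ e) 0 :=
        hv2.congr_of_eventuallyEq heq'.symm
      have hvval : fderiv ℝ (fun y => fderiv ℝ vκ y e) x₀ e
          = (4*c - 8*b^2) * (A * m * (c^2+κ)^(-m-1))
            + b^2 * (16*c^2*(m+1)) * (A * m * (c^2+κ)^(-m-2)) :=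
        hv2'.unique (HeatAux.vline2 A m κ c b hκ)
      -- local maximum of the difference along the line
      have hball : ∀ᶠ s in 𝓝 (0:ℝ), x₀ + s • e ∈ ball (0:EuclideanSpace ℝ (Fin n)) R := by
        have hline : Continuous (fun s : ℝ => x₀ + s • e) := by continuity
        exact hline.continuousAt.preimage_mem_nhds (isOpen_ball.mem_nhds (by simpa using hx₀ball))
      have hmaxg : IsLocalMax (fun s : ℝ => w (x₀ + s • e) t₀ - vκ (x₀ + s • e)) 0 := by
        filter_upwards [hball] with s hs
        have hK : (x₀ + s • e, t₀) ∈ K := ⟨ball_subset_closedBall hs, hz₀K.2⟩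
        have h1 := hz₀max hK
        simp only [hudef, mem_setOf_eq] at h1
        have h2 : v (x₀ + s • e) t₀ = vκ (x₀ + s • e) := by rw [hvdef, hvκdef]
        have h3 : v x₀ t₀ = vκ x₀ := by rw [hvdef, hvκdef]
        simp only [zero_smul, add_zero]
        rw [h2, h3] at h1
        exact h1
      have hg : ∀ᶠ s in 𝓝 (0:ℝ), HasDerivAt
          (fun s : ℝ => w (x₀ + s • e) t₀ - vκ (x₀ + s • e))
          (fderiv ℝ (fun y => w y t₀) (x₀ + s • e) e - fderiv ℝ vκ (x₀ + s • e) e) s := by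
        filter_upwards [hw1, hv1] with s h1 h2
        exact h1.sub h2
      have hg' : HasDerivAt
          (fun s : ℝ => fderiv ℝ (fun y => w y t₀) (x₀ + s • e) e - fderiv ℝ vκ (x₀ + s • e) e)
          (fderiv ℝ (fun y => fderiv ℝ (fun y' => w y' t₀) y e) x₀ e
            - fderiv ℝ (fun y => fderiv ℝ vκ y e) x₀ e) 0 :=
        hw2.sub hv2
      have hst := HeatAux.secondtest hg hg' hmaxg
      rw [hvval] at hst
      simp only [hρdef]
      linarith
    -- sum over coordinates: bound on the Laplacian
    have hlapw : lap n (fun y => w y t₀) x₀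
        ≤ (4*(n:ℝ)*c - 8*‖x₀‖^2) * (A * m * ρ^(-m-1))
          + ‖x₀‖^2*(16*c^2*(m+1)) * (A * m * ρ^(-m-2)) := by
      rw [lap]
      calc ∑ i : Fin n, fderiv ℝ (fun y => fderiv ℝ (fun y' => w y' t₀) y
              (EuclideanSpace.single i 1)) x₀ (EuclideanSpace.single i 1)
          ≤ ∑ i : Fin n, ((4*c - 8*(x₀ i)^2) * (A * m * ρ^(-m-1))
              + (x₀ i)^2 * (16*c^2*(m+1)) * (A * m * ρ^(-m-2))) :=
            Finset.sum_le_sum (fun i _ => key i)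
        _ = _ := HeatAux.sum_helper n x₀ c (A * m * ρ^(-m-1)) (A * m * ρ^(-m-2)) (16*c^2*(m+1))
    -- time derivative at the maximum
    have hvt : HasDerivAt (fun s : ℝ => v x₀ s) (A * m * β * ρ^(-m-1)) t₀ := by
      have h1 : (fun s : ℝ => v x₀ s) = (fun s : ℝ => A * (c^2 + β*(T - s))^(-m)) := by
        funext s
        rw [hvdef]
      rw [h1]
      have := HeatAux.vtime A m β c T t₀ (by simp only [← hκdef, ← hρdef]; exact hρ)
      simpa only [← hκdef, ← hρdef] using this
    have hwt := hw_t x₀ hx₀ball t₀ ht₀mem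
    have hderivh : HasDerivAt (fun s : ℝ => w x₀ s - v x₀ s)
        (deriv (w x₀) t₀ - A * m * β * ρ^(-m-1)) t₀ :=
      hwt.hasDerivAt.sub hvt
    have h0le : 0 ≤ deriv (w x₀) t₀ - A * m * β * ρ^(-m-1) := by
      apply HeatAux.deriv_nonneg_of_left_max _ _ _ hderivh ht₀pos
      intro s hs
      have hK : (x₀, s) ∈ K := ⟨hz₀K.1, ⟨hs.1, le_trans hs.2 ht₀t₁⟩⟩
      have := hz₀max hK
      simpa only [hudef, mem_setOf_eq] using this
    rw [hw_heat x₀ hx₀ball t₀ ht₀mem] at h0le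
    -- final contradiction
    have hrw : ρ^(-m-1) = ρ^(-m-2) * ρ := by
      rw [show -m-1 = (-m-2)+1 by ring, Real.rpow_add_one (ne_of_gt hρ)]
    rw [hrw] at h0le hlapw
    have hX : 0 < ρ^(-m-2) := Real.rpow_pos_of_pos hρ _
    have hS0 : 0 ≤ ‖x₀‖^2 := by positivity
    have hSR : ‖x₀‖^2 ≤ R^2 := by nlinarith [norm_nonneg x₀]
    have hc2ρ : c^2 ≤ ρ := by simp only [hρdef]; linarith
    have := HeatAux.barrier_ineq (n:ℝ) m A c (‖x₀‖^2) ρ (ρ^(-m-2)) R β hA hm hρ hX hc0 hcR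
      hS0 hSR hc2ρ (Nat.cast_nonneg n) hβdef
    nlinarith [this, h0le, hlapw]
  -- conclude
  have hbound : ∀ x : EuclideanSpace ℝ (Fin n), ‖x‖ ≤ a → ∀ t ∈ Ico (0:ℝ) T,
      w x t ≤ A * (R ^ 2 - a ^ 2) ^ (-(2 * m)) := by
    intro x hxa t ht
    have hxR : ‖x‖ ≤ R := le_trans hxa (le_of_lt haR)
    have hxcb : x ∈ closedBall (0:EuclideanSpace ℝ (Fin n)) R := mem_closedBall_zero_iff.2 hxR
    have h1 := hcomp x hxcb t ht.1 ht.2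
    have hd : 0 < R^2 - a^2 := by nlinarith
    have hd2 : (R^2 - a^2)^2 ≤ (R^2 - ‖x‖^2)^2 + β*(T - t) := by
      have h2 : R^2 - a^2 ≤ R^2 - ‖x‖^2 := by nlinarith [norm_nonneg x]
      have h3 : 0 < β*(T - t) := mul_pos hβ (by linarith [ht.2])
      nlinarith
    have hd2pos : (0:ℝ) < (R^2 - a^2)^2 := by positivity
    have h4 : ((R^2 - ‖x‖^2)^2 + β*(T - t))^(-m) ≤ ((R^2 - a^2)^2)^(-m) :=
      Real.rpow_le_rpow_of_nonpos hd2pos hd2 (by linarith)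
    have h5 : v x t ≤ A * ((R^2 - a^2)^2)^(-m) := by
      rw [hvdef]
      exact mul_le_mul_of_nonneg_left h4 (le_of_lt hA)
    have h6 : ((R^2 - a^2)^2)^(-m) = (R^2 - a^2)^(-(2*m)) := by
      rw [show ((R^2 - a^2)^2 : ℝ) = (R^2 - a^2)^((2:ℕ):ℝ) by
        rw [Real.rpow_natCast]]
      rw [← Real.rpow_mul (le_of_lt hd)]
      norm_num
    rw [h6] at h5
    linarith
  refine ⟨A, hA, hbound, ⟨A * (R ^ 2 - a ^ 2) ^ (-(2 * m)), ?_⟩⟩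
  rintro y ⟨x, t, ht, hxa, rfl⟩
  exact hbound x hxa t ht
end
end

section
/- Let R > 0, T > 0, m > 0, C₁ > 0, and C₂ ≥ 4nR² + 16R²(m+1). Define h(x) = (R² − |x|²)² and z(x,t) = C₁ [h(x) + C₂(T−t)]^{−m} for (x,t) ∈ B_R × (0,T). Then z is a supersolution of the heat equation: z_t(x,t) − Δz(x,t) ≥ 0 for all (x,t) ∈ B_R × (0,T). -/
open MeasureTheory Metric Real Set Filter
open scoped Topology

noncomputable section

/-- Coordinate projection as a continuous linear map. -/
noncomputable def eproj (n : ℕ) (i : Fin n) : EuclideanSpace ℝ (Fin n) →L[ℝ] ℝ :=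
  EuclideanSpace.proj i

lemma eproj_apply (n : ℕ) (i : Fin n) (y : EuclideanSpace ℝ (Fin n)) : eproj n i y = y i := rfl

lemma phi_deriv (a c m C₁ : ℝ) (hc : 0 < c) (s : ℝ) :
    HasDerivAt (fun s : ℝ => C₁ * ((a - s) ^ 2 + c) ^ (-m))
      (2 * C₁ * m * (a - s) * ((a - s) ^ 2 + c) ^ (-m - 1)) s := by
  have hb : (0:ℝ) < (a - s) ^ 2 + c := by positivity
  have h1 : HasDerivAt (fun s : ℝ => (a - s) ^ 2 + c) (-(2 * (a - s))) s := by
    have h := (((hasDerivAt_id s).const_sub a).pow 2).add_const c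
    refine h.congr_deriv ?_
    simp only [id]; push_cast; ring
  have h2 := (h1.rpow_const (p := -m) (Or.inl hb.ne')).const_mul C₁
  refine h2.congr_deriv ?_
  ring

lemma phi'_deriv (a c m C₁ : ℝ) (hc : 0 < c) (s : ℝ) :
    HasDerivAt (fun s : ℝ => 2 * C₁ * m * (a - s) * ((a - s) ^ 2 + c) ^ (-m - 1))
      (4 * C₁ * m * (m + 1) * (a - s) ^ 2 * ((a - s) ^ 2 + c) ^ (-m - 2)
        - 2 * C₁ * m * ((a - s) ^ 2 + c) ^ (-m - 1)) s := by
  have hb : (0:ℝ) < (a - s) ^ 2 + c := by positivity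
  have h1 : HasDerivAt (fun s : ℝ => (a - s) ^ 2 + c) (-(2 * (a - s))) s := by
    have h := (((hasDerivAt_id s).const_sub a).pow 2).add_const c
    refine h.congr_deriv ?_
    simp only [id]; push_cast; ring
  have h2 : HasDerivAt (fun s : ℝ => a - s) (-1 : ℝ) s := (hasDerivAt_id s).const_sub a
  have h3 := h1.rpow_const (p := -m - 1) (Or.inl hb.ne')
  have h4 := (h2.mul h3).const_mul (2 * C₁ * m)
  have he : (-m - 1 - 1 : ℝ) = -m - 2 := by ring
  rw [he] at h4
  convert h4 using 1
  · rfl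
  · rfl
  · funext y; simp only [Pi.mul_apply]; ring
  · ring

/-- For `h(x) = (R² - |x|²)²`,
`z(x,t) = C₁ (h(x) + C₂(T-t))^{-m}` with `C₁ > 0`, `m > 0` and
`C₂ ≥ 4nR² + 16R²(m+1)`, the function `z` is a supersolution of the heat equation on
`B_R × (0,T)`: `z_t - Δz ≥ 0`. -/
theorem barrier_function_supersolution
    (n : ℕ) (R T m C₁ C₂ : ℝ) (hR : 0 < R) (hT : 0 < T) (hm : 0 < m) (hC₁ : 0 < C₁)
    (hC₂ : 4 * n * R ^ 2 + 16 * R ^ 2 * (m + 1) ≤ C₂)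
    (z : EuclideanSpace ℝ (Fin n) → ℝ → ℝ)
    (hz : ∀ x t, z x t = C₁ * ((R ^ 2 - ‖x‖ ^ 2) ^ 2 + C₂ * (T - t)) ^ (-m)) :
    ∀ x ∈ ball (0 : EuclideanSpace ℝ (Fin n)) R, ∀ t ∈ Ioo (0 : ℝ) T,
      0 ≤ deriv (z x) t - lap n (fun y => z y t) x := by
  intro x hx t ht
  obtain ⟨ht0, htT⟩ := ht
  have hn : (0:ℝ) ≤ n := Nat.cast_nonneg n
  have hR2 : (0:ℝ) < R ^ 2 := pow_pos hR 2
  have hC2pos : 0 < C₂ := lt_of_lt_of_le (by nlinarith) hC₂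
  have hc : 0 < C₂ * (T - t) := mul_pos hC2pos (by linarith)
  have hu0 : (0:ℝ) ≤ ‖x‖ ^ 2 := sq_nonneg _
  have huR : ‖x‖ ^ 2 ≤ R ^ 2 := by
    have hxR : ‖x‖ < R := by simpa using mem_ball_iff_norm.mp hx
    nlinarith [norm_nonneg x]
  have hb : (0:ℝ) < (R ^ 2 - ‖x‖ ^ 2) ^ 2 + C₂ * (T - t) := by positivity
  -- the time derivative
  have hderiv : deriv (z x) t
      = C₁ * m * C₂ * ((R ^ 2 - ‖x‖ ^ 2) ^ 2 + C₂ * (T - t)) ^ (-m - 1) := by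
    have hzx : z x = fun t => C₁ * ((R ^ 2 - ‖x‖ ^ 2) ^ 2 + C₂ * (T - t)) ^ (-m) :=
      funext (hz x)
    have h1 : HasDerivAt (fun t : ℝ => (R ^ 2 - ‖x‖ ^ 2) ^ 2 + C₂ * (T - t)) (-C₂) t := by
      have h := (((hasDerivAt_id t).const_sub T).const_mul C₂).const_add
        ((R ^ 2 - ‖x‖ ^ 2) ^ 2)
      refine h.congr_deriv ?_
      ring
    have h2 := (h1.rpow_const (p := -m) (Or.inl hb.ne')).const_mul C₁
    rw [hzx, h2.deriv]
    ring
  -- the spatial first derivative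
  have hq : ∀ y : EuclideanSpace ℝ (Fin n),
      HasFDerivAt (fun y : EuclideanSpace ℝ (Fin n) => ‖y‖ ^ 2) (2 • (innerSL ℝ y)) y :=
    fun y => (hasStrictFDerivAt_norm_sq y).hasFDerivAt
  have hfd1 : ∀ y : EuclideanSpace ℝ (Fin n),
      HasFDerivAt (fun y : EuclideanSpace ℝ (Fin n) =>
          C₁ * ((R ^ 2 - ‖y‖ ^ 2) ^ 2 + C₂ * (T - t)) ^ (-m))
        ((2 * C₁ * m * (R ^ 2 - ‖y‖ ^ 2) *
            ((R ^ 2 - ‖y‖ ^ 2) ^ 2 + C₂ * (T - t)) ^ (-m - 1)) • (2 • (innerSL ℝ y))) y :=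
    fun y => (phi_deriv (R ^ 2) (C₂ * (T - t)) m C₁ hc (‖y‖ ^ 2)).comp_hasFDerivAt (f := fun y => ‖y‖ ^ 2) y (hq y)
  have hfderiv1 : ∀ i : Fin n,
      (fun y : EuclideanSpace ℝ (Fin n) =>
        fderiv ℝ (fun y => z y t) y (EuclideanSpace.single i 1)) =
      fun y : EuclideanSpace ℝ (Fin n) =>
        (2 * C₁ * m * (R ^ 2 - ‖y‖ ^ 2) *
          ((R ^ 2 - ‖y‖ ^ 2) ^ 2 + C₂ * (T - t)) ^ (-m - 1)) * (2 * eproj n i y) := by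
    intro i
    funext y
    have hf : (fun y => z y t) = fun y : EuclideanSpace ℝ (Fin n) =>
        C₁ * ((R ^ 2 - ‖y‖ ^ 2) ^ 2 + C₂ * (T - t)) ^ (-m) := funext fun y => hz y t
    rw [hf, (hfd1 y).fderiv]
    simp [eproj_apply, EuclideanSpace.inner_single_right, real_inner_comm]
  -- the second derivatives
  have hfd2 : ∀ i : Fin n,
      fderiv ℝ (fun y => fderiv ℝ (fun y => z y t) y (EuclideanSpace.single i 1)) x
        (EuclideanSpace.single i 1)
      = 2 * (2 * C₁ * m * (R ^ 2 - ‖x‖ ^ 2) *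
            ((R ^ 2 - ‖x‖ ^ 2) ^ 2 + C₂ * (T - t)) ^ (-m - 1))
        + 4 * (4 * C₁ * m * (m + 1) * (R ^ 2 - ‖x‖ ^ 2) ^ 2 *
              ((R ^ 2 - ‖x‖ ^ 2) ^ 2 + C₂ * (T - t)) ^ (-m - 2)
            - 2 * C₁ * m * ((R ^ 2 - ‖x‖ ^ 2) ^ 2 + C₂ * (T - t)) ^ (-m - 1)) * (x i) ^ 2 := by
    intro i
    have hA : HasFDerivAt (fun y : EuclideanSpace ℝ (Fin n) =>
        2 * C₁ * m * (R ^ 2 - ‖y‖ ^ 2) *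
          ((R ^ 2 - ‖y‖ ^ 2) ^ 2 + C₂ * (T - t)) ^ (-m - 1))
        ((4 * C₁ * m * (m + 1) * (R ^ 2 - ‖x‖ ^ 2) ^ 2 *
              ((R ^ 2 - ‖x‖ ^ 2) ^ 2 + C₂ * (T - t)) ^ (-m - 2)
            - 2 * C₁ * m * ((R ^ 2 - ‖x‖ ^ 2) ^ 2 + C₂ * (T - t)) ^ (-m - 1)) •
          (2 • (innerSL ℝ x))) x :=
      (phi'_deriv (R ^ 2) (C₂ * (T - t)) m C₁ hc (‖x‖ ^ 2)).comp_hasFDerivAt (f := fun y => ‖y‖ ^ 2) x (hq x)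
    have hB : HasFDerivAt (fun y : EuclideanSpace ℝ (Fin n) => 2 * eproj n i y)
        ((2:ℝ) • (eproj n i)) x := (eproj n i).hasFDerivAt.const_mul 2
    have hmul := hA.fun_mul hB
    rw [hfderiv1 i, hmul.fderiv]
    have hs : eproj n i (EuclideanSpace.single i 1) = 1 := by
      rw [eproj_apply, EuclideanSpace.single_apply, if_pos rfl]
    simp [hs, eproj_apply, EuclideanSpace.inner_single_right, real_inner_comm]
    ring
  -- summing up: the Laplacian
  have hxsum : ∑ i : Fin n, (x i) ^ 2 = ‖x‖ ^ 2 := by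
    rw [← real_inner_self_eq_norm_sq, PiLp.inner_apply]
    simp [RCLike.inner_apply, sq]
  have hlap : lap n (fun y => z y t) x
      = n * (2 * (2 * C₁ * m * (R ^ 2 - ‖x‖ ^ 2) *
            ((R ^ 2 - ‖x‖ ^ 2) ^ 2 + C₂ * (T - t)) ^ (-m - 1)))
        + 4 * (4 * C₁ * m * (m + 1) * (R ^ 2 - ‖x‖ ^ 2) ^ 2 *
              ((R ^ 2 - ‖x‖ ^ 2) ^ 2 + C₂ * (T - t)) ^ (-m - 2)
            - 2 * C₁ * m * ((R ^ 2 - ‖x‖ ^ 2) ^ 2 + C₂ * (T - t)) ^ (-m - 1)) * ‖x‖ ^ 2 := by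
    unfold lap
    rw [Finset.sum_congr rfl fun i _ => hfd2 i, Finset.sum_add_distrib, Finset.sum_const,
      Finset.card_univ, Fintype.card_fin, ← Finset.mul_sum, hxsum]
    push_cast
    ring
  rw [hderiv, hlap]
  have hP1 : ((R ^ 2 - ‖x‖ ^ 2) ^ 2 + C₂ * (T - t)) ^ (-m - 1)
      = ((R ^ 2 - ‖x‖ ^ 2) ^ 2 + C₂ * (T - t)) ^ (-m - 2) *
        ((R ^ 2 - ‖x‖ ^ 2) ^ 2 + C₂ * (T - t)) := by
    rw [show (-m - 1 : ℝ) = (-m - 2) + 1 by ring, Real.rpow_add hb, Real.rpow_one]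
  rw [hP1]
  have hP2 : (0:ℝ) < ((R ^ 2 - ‖x‖ ^ 2) ^ 2 + C₂ * (T - t)) ^ (-m - 2) :=
    Real.rpow_pos_of_pos hb _
  set B : ℝ := (R ^ 2 - ‖x‖ ^ 2) ^ 2 + C₂ * (T - t) with hB
  set P : ℝ := B ^ (-m - 2) with hP
  have key : 0 ≤ C₂ * B - 4 * n * (R ^ 2 - ‖x‖ ^ 2) * B
      - 16 * (m + 1) * (R ^ 2 - ‖x‖ ^ 2) ^ 2 * ‖x‖ ^ 2 + 8 * ‖x‖ ^ 2 * B := by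
    have h1 : (n:ℝ) * ((R ^ 2 - ‖x‖ ^ 2) * B) ≤ n * (R ^ 2 * B) := by
      apply mul_le_mul_of_nonneg_left _ hn
      apply mul_le_mul_of_nonneg_right _ hb.le
      linarith
    have h2 : (R ^ 2 - ‖x‖ ^ 2) ^ 2 * ‖x‖ ^ 2 ≤ B * R ^ 2 := by
      apply mul_le_mul _ huR hu0 hb.le
      nlinarith
    have h3 : (4 * n * R ^ 2 + 16 * R ^ 2 * (m + 1)) * B ≤ C₂ * B :=
      mul_le_mul_of_nonneg_right hC₂ hb.le
    nlinarith [mul_nonneg hu0 hb.le, hm.le]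
  have hexpand : C₁ * m * C₂ * (P * B)
      - (n * (2 * (2 * C₁ * m * (R ^ 2 - ‖x‖ ^ 2) * (P * B)))
        + 4 * (4 * C₁ * m * (m + 1) * (R ^ 2 - ‖x‖ ^ 2) ^ 2 * P
            - 2 * C₁ * m * (P * B)) * ‖x‖ ^ 2)
      = C₁ * m * P * (C₂ * B - 4 * n * (R ^ 2 - ‖x‖ ^ 2) * B
          - 16 * (m + 1) * (R ^ 2 - ‖x‖ ^ 2) ^ 2 * ‖x‖ ^ 2 + 8 * ‖x‖ ^ 2 * B) := by
    ring
  rw [hexpand]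
  exact mul_nonneg (mul_nonneg (mul_nonneg hC₁.le hm.le) hP2.le) key
end
end
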